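/- arXiv:math/0104271 — 4 statements merged into one kernel-verified Lean document; each statement's English description precedes it below -/
import Mathlib

section
/- Let d > 0, s > 0, and let g : [0,s] → (0,∞) be a continuous function such that for every closed subinterval J ⊆ [0,s] and every Lebesgue-measurable subset ω ⊆ J with |ω| > 0, sup_J g ≤ (4|J|/|ω|)^d · sup_ω g. Let m, n, p, q > 0 be reals with m·n = p·q and p·d < 1. Then (∫_0^s g(x)^m e^{−x} dx)^n · (∫_0^s g(x)^{−p} e^{−x} dx)^q ≤ (2e)^{n+q} · 4^{(mn+pq)d} · Γ(m d + 1)^n / (1 − p d)^q · (1 − e^{−s})^{n+q}, where Γ(x) := ∫_0^∞ t^{x−1} e^{−t} dt. -/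
open MeasureTheory

noncomputable section

namespace NeedleAux
open Set


lemma biSup_le {g : ℝ → ℝ} {ω : Set ℝ} {c : ℝ} (hc : 0 ≤ c) (h : ∀ x ∈ ω, g x ≤ c) :
    (⨆ x ∈ ω, g x) ≤ c := by
  refine Real.iSup_le (fun x => ?_) hc
  by_cases hx : x ∈ ω
  · rw [ciSup_pos hx]; exact h x hx
  · haveI : IsEmpty (x ∈ ω : Prop) := ⟨hx⟩
    rw [Real.iSup_of_isEmpty]; exact hc

lemma le_biSup {g : ℝ → ℝ} {ω : Set ℝ} {C : ℝ} (hC : ∀ x ∈ ω, g x ≤ C) {t : ℝ} (ht : t ∈ ω) :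
    g t ≤ ⨆ x ∈ ω, g x := by
  have hb : BddAbove (Set.range fun x => ⨆ _ : x ∈ ω, g x) := by
    refine ⟨max C 0, ?_⟩
    rintro _ ⟨x, rfl⟩
    show (⨆ _ : x ∈ ω, g x) ≤ max C 0
    by_cases hx : x ∈ ω
    · rw [ciSup_pos (f := fun _ => g x) hx]; exact le_max_of_le_left (hC x hx)
    · haveI : IsEmpty (x ∈ ω : Prop) := ⟨hx⟩
      rw [Real.iSup_of_isEmpty]; exact le_max_right _ _
  calc g t = ⨆ _ : t ∈ ω, g t := (ciSup_pos (f := fun _ => g t) ht).symm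
    _ ≤ _ := le_ciSup hb t

lemma alg_dist {M lam a y d : ℝ} (hM : 0 < M) (hlam : 0 < lam) (ha : 0 < a) (hy : 0 < y)
    (hd : 0 < d) (h : M ≤ (4 * y / a) ^ d * lam) : a ≤ 4 * y * (lam / M) ^ (1 / d) := by
  have h4ya : 0 ≤ 4 * y / a := by positivity
  have h1 : M / lam ≤ (4 * y / a) ^ d := by
    rw [div_le_iff₀ hlam]; linarith [h]
  have h2 : (M / lam) ^ (1 / d) ≤ 4 * y / a := by
    calc (M / lam) ^ (1 / d) ≤ ((4 * y / a) ^ d) ^ (1 / d) :=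
          Real.rpow_le_rpow (by positivity) h1 (by positivity)
      _ = (4 * y / a) ^ (d * (1 / d)) := (Real.rpow_mul h4ya _ _).symm
      _ = 4 * y / a := by rw [mul_one_div_cancel hd.ne', Real.rpow_one]
  have hpow : 0 < (M / lam) ^ (1 / d) := Real.rpow_pos_of_pos (by positivity) _
  have h3 : a * (M / lam) ^ (1 / d) ≤ 4 * y := by
    rw [mul_comm]; exact (le_div_iff₀ ha).mp h2
  have h4 : (lam / M) ^ (1 / d) = ((M / lam) ^ (1 / d))⁻¹ := by
    rw [← Real.inv_rpow (by positivity), inv_div]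
  rw [h4, ← div_eq_mul_inv]
  exact (le_div_iff₀ hpow).mpr h3

lemma min_int {y c T r : ℝ} (hy : 0 < y) (hc : 0 ≤ c) (hT : 0 < T) (hr : 1 < r) :
    IntegrableOn (fun t => min y (c * t ^ (-r))) (Ioi (0:ℝ)) ∧
    ∫ t in Ioi (0:ℝ), min y (c * t ^ (-r)) ≤ y * T + c * (T ^ (1 - r) / (r - 1)) := by
  set f : ℝ → ℝ := fun t => min y (c * t ^ (-r)) with hf
  have hG : ContinuousOn (fun t : ℝ => c * t ^ (-r)) (Ioi (0:ℝ)) :=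
    continuousOn_const.mul (continuousOn_id.rpow_const (fun x hx => Or.inl (ne_of_gt hx)))
  have hcont : ContinuousOn f (Ioi (0:ℝ)) :=
    (continuous_const.min continuous_id).comp_continuousOn hG
  have hr1 : -r < -1 := by linarith
  have hint2' : IntegrableOn (fun t => c * t ^ (-r)) (Ioi T) :=
    (integrableOn_Ioi_rpow_of_lt hr1 hT).const_mul c
  have hint1 : IntegrableOn f (Ioc 0 T) := by
    refine ⟨(hcont.mono Ioc_subset_Ioi_self).aestronglyMeasurable measurableSet_Ioc,
      HasFiniteIntegral.restrict_of_bounded (C := y) measure_Ioc_lt_top ?_⟩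
    · filter_upwards [ae_restrict_mem measurableSet_Ioc] with t ht
      have h1 : 0 ≤ c * t ^ (-r) := by
        have := Real.rpow_nonneg (le_of_lt ht.1) (-r); positivity
      rw [Real.norm_eq_abs, abs_of_nonneg (le_min hy.le h1)]
      exact min_le_left _ _
  have hint2 : IntegrableOn f (Ioi T) := by
    refine MeasureTheory.Integrable.mono hint2'
      ((hcont.mono (Ioi_subset_Ioi hT.le)).aestronglyMeasurable measurableSet_Ioi) ?_
    filter_upwards [ae_restrict_mem measurableSet_Ioi] with t ht
    have ht0 : (0:ℝ) < t := hT.trans ht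
    have h1 : 0 ≤ c * t ^ (-r) := by
      have := Real.rpow_nonneg ht0.le (-r); positivity
    rw [Real.norm_eq_abs, Real.norm_eq_abs, abs_of_nonneg (le_min hy.le h1), abs_of_nonneg h1]
    exact min_le_right _ _
  have hunion : Ioc (0:ℝ) T ∪ Ioi T = Ioi 0 := Ioc_union_Ioi_eq_Ioi hT.le
  have hintf : IntegrableOn f (Ioi (0:ℝ)) := by rw [← hunion]; exact hint1.union hint2
  refine ⟨hintf, ?_⟩
  have hsplit : ∫ t in Ioi (0:ℝ), f t = (∫ t in Ioc 0 T, f t) + ∫ t in Ioi T, f t := by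
    rw [← hunion, setIntegral_union (Ioc_disjoint_Ioi le_rfl) measurableSet_Ioi hint1 hint2]
  rw [hsplit]
  have hb1 : ∫ t in Ioc 0 T, f t ≤ y * T := by
    have : ∫ t in Ioc 0 T, f t ≤ ∫ _t in Ioc (0:ℝ) T, y :=
      setIntegral_mono_on hint1 (integrableOn_const measure_Ioc_lt_top.ne)
        measurableSet_Ioc (fun x _ => min_le_left _ _)
    rw [setIntegral_const, measureReal_def, Real.volume_Ioc, smul_eq_mul, sub_zero,
      ENNReal.toReal_ofReal hT.le] at this
    linarith [this]
  have hb2 : ∫ t in Ioi T, f t ≤ c * (T ^ (1 - r) / (r - 1)) := by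
    have h1 : ∫ t in Ioi T, f t ≤ ∫ t in Ioi T, c * t ^ (-r) :=
      setIntegral_mono_on hint2 hint2' measurableSet_Ioi (fun x _ => min_le_right _ _)
    have h2 : ∫ t in Ioi T, c * t ^ (-r) = c * ∫ t in Ioi T, t ^ (-r) := by
      rw [integral_const_mul]
    have h3 : ∫ t in Ioi T, (t:ℝ) ^ (-r) = -T ^ (-r + 1) / (-r + 1) := integral_Ioi_rpow_of_lt hr1 hT
    have h4 : -T ^ (-r + 1) / (-r + 1) = T ^ (1 - r) / (r - 1) := by
      rw [show -r + 1 = 1 - r by ring]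
      rw [div_eq_div_iff (by linarith) (by linarith)]; ring
    calc ∫ t in Ioi T, f t ≤ c * ∫ t in Ioi T, t ^ (-r) := by rw [← h2]; exact h1
      _ = c * (T ^ (1 - r) / (r - 1)) := by rw [h3, h4]
  linarith

lemma G_bound {g : ℝ → ℝ} {p d y M : ℝ} (hp : 0 < p) (hd : 0 < d) (hpd0 : 0 < p * d)
    (hpd : p * d < 1) (hy : 0 < y) (hM : 0 < M)
    (hgpos : ∀ x ∈ Ioc (0:ℝ) y, 0 < g x)
    (hint : IntegrableOn (fun t => g t ^ (-p)) (Ioc 0 y))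
    (hdist : ∀ lam : ℝ, 0 < lam →
      volume {x ∈ Ioc (0:ℝ) y | g x ≤ lam} ≤ ENNReal.ofReal (4 * y * (lam / M) ^ (1 / d))) :
    ∫ t in Ioc (0:ℝ) y, g t ^ (-p) ≤ 4 ^ (p * d) / (1 - p * d) * y * M ^ (-p) := by
  set μ := volume.restrict (Ioc (0:ℝ) y) with hμ
  haveI : IsFiniteMeasure μ := by
    constructor
    rw [hμ, Measure.restrict_apply_univ]
    exact measure_Ioc_lt_top
  set f : ℝ → ℝ := fun t => g t ^ (-p) with hfdef
  have f_nn : 0 ≤ᵐ[μ] f := by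
    rw [hμ]
    filter_upwards [ae_restrict_mem measurableSet_Ioc] with t ht
    exact Real.rpow_nonneg (hgpos t ht).le _
  have key : ∫ t in Ioc (0:ℝ) y, f t = ∫ t in Ioi (0:ℝ), (μ {a : ℝ | t < f a}).toReal :=
    hint.integral_eq_integral_meas_lt f_nn
  set r : ℝ := 1 / (p * d) with hrdef
  have hr : 1 < r := by rw [hrdef, lt_div_iff₀ hpd0]; linarith
  have hMd : 0 < M ^ (1 / d) := Real.rpow_pos_of_pos hM _
  set c : ℝ := 4 * y / M ^ (1 / d) with hcdef
  have hc : 0 ≤ c := by positivity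
  set T : ℝ := 4 ^ (p * d) * M ^ (-p) with hTdef
  have hT : 0 < T := by
    have := Real.rpow_pos_of_pos hM (-p)
    have : (0:ℝ) < (4:ℝ) ^ (p*d) := Real.rpow_pos_of_pos (by norm_num) _
    positivity
  obtain ⟨hψint, hψval⟩ := min_int hy hc hT hr
  -- pointwise bound on the distribution function
  have hpt : ∀ t ∈ Ioi (0:ℝ), (μ {a : ℝ | t < f a}).toReal ≤ min y (c * t ^ (-r)) := by
    intro t ht
    have ht0 : (0:ℝ) < t := ht
    have hμA : μ {a : ℝ | t < f a} = volume ({a : ℝ | t < f a} ∩ Ioc 0 y) :=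
      Measure.restrict_apply' measurableSet_Ioc
    set lam : ℝ := t ^ (-(1/p)) with hlamdef
    have hlam : 0 < lam := Real.rpow_pos_of_pos ht0 _
    have hsub : {a : ℝ | t < f a} ∩ Ioc 0 y ⊆ {x ∈ Ioc (0:ℝ) y | g x ≤ lam} := by
      rintro a ⟨hta, ha⟩
      have hga : 0 < g a := hgpos a ha
      refine ⟨ha, ?_⟩
      have h1 : (g a ^ (-p)) ^ (-(1/p)) < t ^ (-(1/p)) :=
        Real.rpow_lt_rpow_of_neg ht0 hta (neg_lt_zero.mpr (by positivity))
      have h2 : (g a ^ (-p)) ^ (-(1/p)) = g a := by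
        rw [← Real.rpow_mul hga.le]
        rw [show (-p) * (-(1/p)) = 1 by field_simp]
        exact Real.rpow_one _
      rw [h2] at h1
      exact h1.le
    have hb1 : μ {a : ℝ | t < f a} ≤ ENNReal.ofReal y := by
      rw [hμA]
      calc volume ({a : ℝ | t < f a} ∩ Ioc 0 y) ≤ volume (Ioc (0:ℝ) y) :=
            measure_mono inter_subset_right
        _ = ENNReal.ofReal y := by rw [Real.volume_Ioc, sub_zero]
    have heq : 4 * y * (lam / M) ^ (1 / d) = c * t ^ (-r) := by
      rw [Real.div_rpow hlam.le hM.le, hlamdef, ← Real.rpow_mul ht0.le]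
      rw [show -(1/p) * (1/d) = -r by rw [hrdef]; field_simp]
      rw [hcdef]; ring
    have hb2 : μ {a : ℝ | t < f a} ≤ ENNReal.ofReal (c * t ^ (-r)) := by
      rw [hμA, ← heq]
      exact le_trans (measure_mono hsub) (hdist lam hlam)
    have hctr : 0 ≤ c * t ^ (-r) := by
      have := Real.rpow_nonneg ht0.le (-r); positivity
    exact le_min (ENNReal.toReal_le_of_le_ofReal hy.le hb1)
      (ENNReal.toReal_le_of_le_ofReal hctr hb2)
  -- integrability of the distribution function and comparison
  have hmeas_dist : Measurable (fun t : ℝ => (μ {a : ℝ | t < f a}).toReal) := by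
    apply Measurable.ennreal_toReal
    exact Antitone.measurable (fun t1 t2 h12 =>
      measure_mono (fun a ha => lt_of_le_of_lt h12 ha))
  have hint_dist : IntegrableOn (fun t : ℝ => (μ {a : ℝ | t < f a}).toReal) (Ioi (0:ℝ)) := by
    refine MeasureTheory.Integrable.mono hψint hmeas_dist.aestronglyMeasurable ?_
    filter_upwards [ae_restrict_mem measurableSet_Ioi] with t ht
    rw [Real.norm_eq_abs, abs_of_nonneg ENNReal.toReal_nonneg]
    exact le_trans (hpt t ht) (le_abs_self _)
  have hcomp : ∫ t in Ioi (0:ℝ), (μ {a : ℝ | t < f a}).toReal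
      ≤ ∫ t in Ioi (0:ℝ), min y (c * t ^ (-r)) :=
    setIntegral_mono_on hint_dist hψint measurableSet_Ioi hpt
  -- final algebra
  have halg : y * T + c * (T ^ (1 - r) / (r - 1)) = 4 ^ (p * d) / (1 - p * d) * y * M ^ (-p) := by
    have hcT : c * T ^ (1 - r) = y * T := by
      have e1 : T ^ (1 - r) = T * T ^ (-r) := by
        rw [show (1:ℝ) - r = 1 + (-r) by ring, Real.rpow_add hT, Real.rpow_one]
      have e2 : T ^ (-r) = (4:ℝ) ^ ((p*d) * (-r)) * M ^ ((-p) * (-r)) := by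
        rw [hTdef, Real.mul_rpow (by positivity) (Real.rpow_nonneg hM.le _),
          ← Real.rpow_mul (by norm_num : (0:ℝ) ≤ 4), ← Real.rpow_mul hM.le]
      have e3 : (p*d) * (-r) = -1 := by rw [hrdef]; field_simp
      have e4 : (-p) * (-r) = 1/d := by rw [hrdef]; field_simp
      rw [e1, e2, e3, e4, Real.rpow_neg_one, hcdef]
      field_simp
    rw [← mul_div_assoc, hcT]
    have hr1 : r - 1 = (1 - p*d) / (p*d) := by rw [hrdef]; field_simp
    rw [hTdef, hr1]
    have h1pd : (0:ℝ) < 1 - p*d := by linarith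
    field_simp
    ring
  calc ∫ t in Ioc (0:ℝ) y, g t ^ (-p) = ∫ t in Ioi (0:ℝ), (μ {a : ℝ | t < f a}).toReal := key
    _ ≤ ∫ t in Ioi (0:ℝ), min y (c * t ^ (-r)) := hcomp
    _ ≤ y * T + c * (T ^ (1 - r) / (r - 1)) := hψval
    _ = _ := halg
lemma exp_Ioc {b : ℝ} (hb : 0 ≤ b) : ∫ x in Ioc (0:ℝ) b, Real.exp (-x) = 1 - Real.exp (-b) := by
  rw [← intervalIntegral.integral_of_le hb,
    intervalIntegral.integral_comp_neg (fun x => Real.exp x), integral_exp]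
  norm_num

lemma gamma_ge {a : ℝ} (ha : 0 ≤ a) : Real.exp (-1) ≤ Real.Gamma (a + 1) := by
  have ha1 : (0:ℝ) < a + 1 := by linarith
  rw [Real.Gamma_eq_integral ha1]
  have hconv := Real.GammaIntegral_convergent ha1
  have hexpint : IntegrableOn (fun x : ℝ => Real.exp (-x)) (Ioi (1:ℝ)) := by
    have := exp_neg_integrableOn_Ioi (1:ℝ) (b := 1) one_pos
    simpa using this
  calc Real.exp (-1) = ∫ x in Ioi (1:ℝ), Real.exp (-x) := (integral_exp_neg_Ioi 1).symm
    _ ≤ ∫ x in Ioi (1:ℝ), Real.exp (-x) * x ^ (a + 1 - 1) := by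
        refine setIntegral_mono_on hexpint
          (hconv.mono_set (Ioi_subset_Ioi zero_le_one)) measurableSet_Ioi (fun x hx => ?_)
        have hx1 : (1:ℝ) ≤ x := le_of_lt hx
        have : (1:ℝ) ≤ x ^ (a + 1 - 1) := by
          calc (1:ℝ) = 1 ^ (a + 1 - 1) := (Real.one_rpow _).symm
            _ ≤ x ^ (a + 1 - 1) := Real.rpow_le_rpow zero_le_one hx1 (by linarith)
        nlinarith [Real.exp_pos (-x)]
    _ ≤ ∫ x in Ioi (0:ℝ), Real.exp (-x) * x ^ (a + 1 - 1) := by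
        refine setIntegral_mono_set hconv ?_ (HasSubset.Subset.eventuallyLE (Ioi_subset_Ioi zero_le_one))
        filter_upwards [ae_restrict_mem measurableSet_Ioi] with x hx
        have := Real.rpow_nonneg (le_of_lt hx) (a + 1 - 1)
        have := (Real.exp_pos (-x)).le
        positivity

lemma hasSum_aux {x : ℝ} (hx : |x| < 1) :
    HasSum (fun k : ℕ => ((k:ℝ) + 2) * x ^ (k+1))
      (x * (x / (1-x)^2) + 2*x * (1-x)⁻¹) := by
  have h1 : HasSum (fun k : ℕ => (k:ℝ) * x ^ k) (x / (1-x)^2) :=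
    hasSum_coe_mul_geometric_of_norm_lt_one (by rwa [Real.norm_eq_abs])
  have h2 : HasSum (fun k : ℕ => x ^ k) (1-x)⁻¹ :=
    hasSum_geometric_of_norm_lt_one (by rwa [Real.norm_eq_abs])
  have hfun : (fun k : ℕ => ((k:ℝ) + 2) * x ^ (k+1))
      = fun k : ℕ => x * ((k:ℝ) * x ^ k) + 2*x * x ^ k := by
    funext k; ring
  rw [hfun]
  exact (h1.mul_left x).add (h2.mul_left (2*x))

end NeedleAux

open NeedleAux

set_option maxHeartbeats 2000000

/-- The one-dimensional inequality in the proof of Theorem 1.5: if `g > 0` is continuous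
on `[0,s]` and satisfies a Remez-type inequality with exponent `d` on every closed
subinterval of `[0,s]`, then for `m·n = p·q`, `p·d < 1`,
`(∫_0^s g^m e^{−x})^n (∫_0^s g^{−p} e^{−x})^q
  ≤ (2e)^{n+q} 4^{(mn+pq)d} Γ(md+1)^n / (1−pd)^q · (1−e^{−s})^{n+q}`. -/

theorem needle_inequality (d s : ℝ) (hd : 0 < d) (hs : 0 < s)
    (g : ℝ → ℝ) (hg : ContinuousOn g (Set.Icc 0 s))
    (hgpos : ∀ x ∈ Set.Icc (0 : ℝ) s, 0 < g x)
    -- the Remez-type condition on every closed subinterval `J = [u,v] ⊆ [0,s]`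
    (hrem : ∀ u v : ℝ, 0 ≤ u → u ≤ v → v ≤ s →
      ∀ ω : Set ℝ, ω ⊆ Set.Icc u v → MeasurableSet ω → 0 < volume ω →
        (⨆ x ∈ Set.Icc u v, g x) ≤
          (4 * (v - u) / (volume ω).toReal) ^ d * ⨆ x ∈ ω, g x)
    (m n p q : ℝ) (hm : 0 < m) (hn : 0 < n) (hp : 0 < p) (hq : 0 < q)
    (hmn : m * n = p * q) (hpd : p * d < 1) :
    (∫ x in (0 : ℝ)..s, g x ^ m * Real.exp (-x)) ^ n *
        (∫ x in (0 : ℝ)..s, g x ^ (-p) * Real.exp (-x)) ^ q ≤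
      (2 * Real.exp 1) ^ (n + q) * (4 : ℝ) ^ ((m * n + p * q) * d) *
        Real.Gamma (m * d + 1) ^ n / (1 - p * d) ^ q * (1 - Real.exp (-s)) ^ (n + q) := by
  have hΓpos : 0 < Real.Gamma (m * d + 1) := Real.Gamma_pos_of_pos (by positivity)
  have hexps : Real.exp (-s) < 1 := by
    rw [Real.exp_lt_one_iff]; linarith
  have hEspos : 0 < 1 - Real.exp (-s) := by linarith
  have hE0 : (0 : ℝ) < Real.exp 1 := Real.exp_pos 1
  have hE1 : (2.7182818283 : ℝ) < Real.exp 1 := Real.exp_one_gt_d9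
  have hE2 : Real.exp 1 < 2.7182818286 := Real.exp_one_lt_d9
  have hEe : Real.exp 1 * Real.exp (-1) = 1 := by
    rw [← Real.exp_add]; norm_num
  have he1pos : (0 : ℝ) < Real.exp (-1) := Real.exp_pos _
  have he1ub : Real.exp (-1) < 0.368 := by nlinarith [hEe, hE1, he1pos]
  have hpd0 : 0 < p * d := by positivity
  have h1pd : 0 < 1 - p * d := by linarith
  have hC1pos : (0 : ℝ) < 4 ^ (p * d) / (1 - p * d) := by
    have : (0:ℝ) < (4:ℝ) ^ (p*d) := Real.rpow_pos_of_pos (by norm_num) _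
    positivity
  -- continuity of integrands
  have hgm : ContinuousOn (fun x => g x ^ m * Real.exp (-x)) (Set.Icc 0 s) :=
    (hg.rpow_const (fun x hx => Or.inl (hgpos x hx).ne')).mul
      ((Real.continuous_exp.comp continuous_neg).continuousOn)
  have hgp0 : ContinuousOn (fun x => g x ^ (-p)) (Set.Icc 0 s) :=
    hg.rpow_const (fun x hx => Or.inl (hgpos x hx).ne')
  have hgp : ContinuousOn (fun x => g x ^ (-p) * Real.exp (-x)) (Set.Icc 0 s) :=
    hgp0.mul ((Real.continuous_exp.comp continuous_neg).continuousOn)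
  -- the running supremum
  set Ms : ℝ → ℝ := fun y => sSup (g '' Set.Icc 0 y) with hMsdef
  have hbdd : ∀ y : ℝ, y ≤ s → BddAbove (g '' Set.Icc 0 y) := fun y hy =>
    (isCompact_Icc.image_of_continuousOn (hg.mono (Set.Icc_subset_Icc le_rfl hy))).bddAbove
  have hub : ∀ y : ℝ, y ≤ s → ∀ t ∈ Set.Icc (0:ℝ) y, g t ≤ Ms y := fun y hy t ht =>
    le_csSup (hbdd y hy) (Set.mem_image_of_mem g ht)
  have hMpos : ∀ y : ℝ, 0 ≤ y → y ≤ s → 0 < Ms y := fun y h0 hy =>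
    lt_of_lt_of_le (hgpos 0 ⟨le_rfl, hs.le⟩) (hub y hy 0 ⟨le_rfl, h0⟩)
  have hMmono : ∀ y z : ℝ, 0 ≤ y → y ≤ z → z ≤ s → Ms y ≤ Ms z := fun y z h0 hyz hz =>
    csSup_le_csSup (hbdd z hz) ⟨g 0, Set.mem_image_of_mem g ⟨le_rfl, h0⟩⟩
      (Set.image_mono (Set.Icc_subset_Icc le_rfl hyz))
  have hMsle : ∀ y : ℝ, 0 ≤ y → y ≤ s → Ms y ≤ ⨆ x ∈ Set.Icc (0:ℝ) y, g x := by
    intro y h0 hy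
    refine csSup_le ⟨g 0, Set.mem_image_of_mem g ⟨le_rfl, h0⟩⟩ ?_
    rintro b ⟨t, ht, rfl⟩
    exact le_biSup (fun x hx => hub y hy x hx) ht
  -- Remez comparison of running sups
  have hF1 : ∀ w x : ℝ, 0 < w → w ≤ x → x ≤ s → Ms x ≤ (4 * x / w) ^ d * Ms w := by
    intro w x hw hwx hxs
    have h0x : (0:ℝ) ≤ x := le_trans hw.le hwx
    have hws : w ≤ s := le_trans hwx hxs
    have hvol : volume (Set.Icc (0:ℝ) w) = ENNReal.ofReal w := by
      rw [Real.volume_Icc, sub_zero]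
    have hpos : 0 < volume (Set.Icc (0:ℝ) w) := by
      rw [hvol]; exact ENNReal.ofReal_pos.mpr hw
    have hR := hrem 0 x le_rfl h0x hxs (Set.Icc 0 w)
      (Set.Icc_subset_Icc le_rfl hwx) measurableSet_Icc hpos
    have htr : (volume (Set.Icc (0:ℝ) w)).toReal = w := by
      rw [hvol, ENNReal.toReal_ofReal hw.le]
    rw [htr, sub_zero] at hR
    have h2 : (⨆ t ∈ Set.Icc (0:ℝ) w, g t) ≤ Ms w :=
      biSup_le (hMpos w hw.le hws).le (fun t ht => hub w hws t ht)
    calc Ms x ≤ ⨆ t ∈ Set.Icc (0:ℝ) x, g t := hMsle x h0x hxs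
      _ ≤ (4 * x / w) ^ d * ⨆ t ∈ Set.Icc (0:ℝ) w, g t := hR
      _ ≤ (4 * x / w) ^ d * Ms w :=
          mul_le_mul_of_nonneg_left h2 (Real.rpow_nonneg (by positivity) d)
  -- bound for the integral of `g ^ (-p)` on initial segments
  have hGb : ∀ y : ℝ, 0 < y → y ≤ s →
      ∫ t in Set.Ioc (0:ℝ) y, g t ^ (-p) ≤ 4 ^ (p*d) / (1 - p*d) * y * (Ms y) ^ (-p) := by
    intro y hy hys
    refine G_bound hp hd hpd0 hpd hy (hMpos y hy.le hys)
      (fun x hx => hgpos x ⟨hx.1.le, hx.2.trans hys⟩)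
      (((hgp0.mono (Set.Icc_subset_Icc le_rfl hys)).integrableOn_Icc).mono_set
        Set.Ioc_subset_Icc_self) ?_
    intro lam hlam
    set ω : Set ℝ := Set.Icc 0 y ∩ {x | g x ≤ lam} with hω
    have hωmeas : MeasurableSet ω := by
      have hclosed : IsClosed ω := by
        have hcont : ContinuousOn g (Set.Icc 0 y) := hg.mono (Set.Icc_subset_Icc le_rfl hys)
        have := hcont.preimage_isClosed_of_isClosed isClosed_Icc (isClosed_Iic (a := lam))
        simpa [Set.preimage, Set.Iic] using this
      exact hclosed.measurableSet
    have hωfin : volume ω ≠ ⊤ :=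
      ne_top_of_le_ne_top (by rw [Real.volume_Icc]; exact ENNReal.ofReal_ne_top)
        (measure_mono Set.inter_subset_left)
    have hsub : {x ∈ Set.Ioc (0:ℝ) y | g x ≤ lam} ⊆ ω :=
      fun x hx => ⟨Set.Ioc_subset_Icc_self hx.1, hx.2⟩
    by_cases h0 : volume ω = 0
    · calc volume {x ∈ Set.Ioc (0:ℝ) y | g x ≤ lam} ≤ volume ω := measure_mono hsub
        _ = 0 := h0
        _ ≤ _ := zero_le
    · have hvolpos : 0 < volume ω := lt_of_le_of_ne zero_le (Ne.symm h0)
      have hrem' := hrem 0 y le_rfl hy.le hys ω Set.inter_subset_left hωmeas hvolpos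
      have ha : 0 < (volume ω).toReal := ENNReal.toReal_pos h0 hωfin
      have h2 : (⨆ x ∈ ω, g x) ≤ lam := biSup_le hlam.le (fun x hx => hx.2)
      rw [sub_zero] at hrem'
      have h3 : Ms y ≤ (4 * y / (volume ω).toReal) ^ d * lam := by
        calc Ms y ≤ _ := hMsle y hy.le hys
          _ ≤ _ := hrem'
          _ ≤ (4 * y / (volume ω).toReal) ^ d * lam :=
              mul_le_mul_of_nonneg_left h2 (Real.rpow_nonneg (by positivity) d)
      have h4 := alg_dist (hMpos y hy.le hys) hlam ha hy hd h3
      calc volume {x ∈ Set.Ioc (0:ℝ) y | g x ≤ lam} ≤ volume ω := measure_mono hsub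
        _ = ENNReal.ofReal ((volume ω).toReal) := (ENNReal.ofReal_toReal hωfin).symm
        _ ≤ ENNReal.ofReal (4 * y * (lam / Ms y) ^ (1 / d)) := ENNReal.ofReal_le_ofReal h4
  -- the two main bounds, with M0 the sup of g on [0, min s 1]
  have main : ∃ M0 : ℝ, 0 < M0 ∧
      (∫ x in (0:ℝ)..s, g x ^ m * Real.exp (-x)) ≤
        2 * Real.exp 1 * (4:ℝ) ^ (m*d) * Real.Gamma (m*d+1) * (1 - Real.exp (-s)) * M0 ^ m ∧
      (∫ x in (0:ℝ)..s, g x ^ (-p) * Real.exp (-x)) ≤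
        2 * Real.exp 1 * ((4:ℝ) ^ (p*d) / (1 - p*d)) * (1 - Real.exp (-s)) * M0 ^ (-p) := by
    have h4md1 : (1:ℝ) ≤ (4:ℝ) ^ (m*d) := by
      calc (1:ℝ) = (4:ℝ) ^ (0:ℝ) := (Real.rpow_zero 4).symm
        _ ≤ (4:ℝ) ^ (m*d) := Real.rpow_le_rpow_of_exponent_le (by norm_num) (by positivity)
    have hΓe : Real.exp (-1) ≤ Real.Gamma (m*d+1) := gamma_ge (by positivity)
    rcases le_or_gt s 1 with hs1 | hs1
    -- CASE s ≤ 1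
    · refine ⟨Ms s, hMpos s hs.le le_rfl, ?_, ?_⟩
      · -- A bound
        have hM0m : (0:ℝ) < Ms s ^ m := Real.rpow_pos_of_pos (hMpos s hs.le le_rfl) _
        have hAle : ∫ x in (0:ℝ)..s, g x ^ m * Real.exp (-x) ≤ (1 - Real.exp (-s)) * Ms s ^ m := by
          rw [intervalIntegral.integral_of_le hs.le]
          have hint1 : IntegrableOn (fun x => g x ^ m * Real.exp (-x)) (Set.Ioc 0 s) :=
            hgm.integrableOn_Icc.mono_set Set.Ioc_subset_Icc_self
          have hint2 : IntegrableOn (fun x => Ms s ^ m * Real.exp (-x)) (Set.Ioc 0 s) :=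
            ((continuous_const.mul (Real.continuous_exp.comp continuous_neg)).integrableOn_Icc).mono_set
              Set.Ioc_subset_Icc_self
          calc ∫ x in Set.Ioc (0:ℝ) s, g x ^ m * Real.exp (-x)
              ≤ ∫ x in Set.Ioc (0:ℝ) s, Ms s ^ m * Real.exp (-x) := by
                refine setIntegral_mono_on hint1 hint2 measurableSet_Ioc (fun x hx => ?_)
                exact mul_le_mul_of_nonneg_right
                  (Real.rpow_le_rpow (hgpos x ⟨hx.1.le, hx.2⟩).le
                    (hub s le_rfl x ⟨hx.1.le, hx.2⟩) hm.le) (Real.exp_pos _).le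
            _ = Ms s ^ m * (1 - Real.exp (-s)) := by rw [integral_const_mul, exp_Ioc hs.le]
            _ = (1 - Real.exp (-s)) * Ms s ^ m := by ring
        have h1 : (1:ℝ) ≤ 2 * Real.exp 1 * ((4:ℝ) ^ (m*d) * Real.Gamma (m*d+1)) := by
          have t1 : Real.Gamma (m*d+1) ≤ (4:ℝ)^(m*d) * Real.Gamma (m*d+1) :=
            le_mul_of_one_le_left hΓpos.le h4md1
          nlinarith [hΓe, hEe, hE0, he1pos]
        calc ∫ x in (0:ℝ)..s, g x ^ m * Real.exp (-x) ≤ (1 - Real.exp (-s)) * Ms s ^ m := hAle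
          _ ≤ 2 * Real.exp 1 * ((4:ℝ) ^ (m*d) * Real.Gamma (m*d+1)) *
              ((1 - Real.exp (-s)) * Ms s ^ m) := le_mul_of_one_le_left (by positivity) h1
          _ = 2 * Real.exp 1 * (4:ℝ) ^ (m*d) * Real.Gamma (m*d+1) * (1 - Real.exp (-s)) * Ms s ^ m := by
              ring
      · -- B bound
        have hM0p : (0:ℝ) < Ms s ^ (-p) := Real.rpow_pos_of_pos (hMpos s hs.le le_rfl) _
        have hBle : ∫ x in (0:ℝ)..s, g x ^ (-p) * Real.exp (-x) ≤
            4 ^ (p*d) / (1 - p*d) * s * Ms s ^ (-p) := by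
          rw [intervalIntegral.integral_of_le hs.le]
          have hint1 : IntegrableOn (fun x => g x ^ (-p) * Real.exp (-x)) (Set.Ioc 0 s) :=
            hgp.integrableOn_Icc.mono_set Set.Ioc_subset_Icc_self
          have hint2 : IntegrableOn (fun x => g x ^ (-p)) (Set.Ioc 0 s) :=
            hgp0.integrableOn_Icc.mono_set Set.Ioc_subset_Icc_self
          calc ∫ x in Set.Ioc (0:ℝ) s, g x ^ (-p) * Real.exp (-x)
              ≤ ∫ x in Set.Ioc (0:ℝ) s, g x ^ (-p) := by
                refine setIntegral_mono_on hint1 hint2 measurableSet_Ioc (fun x hx => ?_)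
                have h0 : 0 ≤ g x ^ (-p) := Real.rpow_nonneg (hgpos x ⟨hx.1.le, hx.2⟩).le _
                have he : Real.exp (-x) ≤ 1 := by
                  calc Real.exp (-x) ≤ Real.exp 0 := Real.exp_le_exp.mpr (by linarith [hx.1])
                    _ = 1 := Real.exp_zero
                nlinarith
            _ ≤ _ := hGb s hs le_rfl
        have hsle : s ≤ 2 * Real.exp 1 * (1 - Real.exp (-s)) := by
          have hu : 0 < Real.exp (-s) := Real.exp_pos _
          have h1 : Real.exp (-s) * (1 + s) ≤ 1 := by
            have h2 : (1:ℝ) + s ≤ Real.exp s := by linarith [Real.add_one_le_exp s]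
            have h4 : Real.exp (-s) * Real.exp s = 1 := by rw [← Real.exp_add]; norm_num
            nlinarith
          have hu2 : Real.exp (-1) ≤ Real.exp (-s) := Real.exp_le_exp.mpr (by linarith)
          nlinarith [mul_le_mul_of_nonneg_left h1 (by positivity : (0:ℝ) ≤ 2 * Real.exp 1),
            mul_nonneg hs.le (sub_nonneg.mpr (mul_le_mul_of_nonneg_left hu2 hE0.le)), hEe]
        calc ∫ x in (0:ℝ)..s, g x ^ (-p) * Real.exp (-x)
            ≤ 4 ^ (p*d) / (1 - p*d) * s * Ms s ^ (-p) := hBle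
          _ ≤ 4 ^ (p*d) / (1 - p*d) * (2 * Real.exp 1 * (1 - Real.exp (-s))) * Ms s ^ (-p) := by
              refine mul_le_mul_of_nonneg_right (mul_le_mul_of_nonneg_left hsle hC1pos.le) hM0p.le
          _ = 2 * Real.exp 1 * ((4:ℝ) ^ (p*d) / (1 - p*d)) * (1 - Real.exp (-s)) * Ms s ^ (-p) := by
              ring
    -- CASE s > 1
    · have hMs1pos : 0 < Ms 1 := hMpos 1 zero_le_one hs1.le
      have hIcc01 : Set.Icc (0:ℝ) 1 ⊆ Set.Icc 0 s := Set.Icc_subset_Icc le_rfl hs1.le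
      have hIcc1s : Set.Icc (1:ℝ) s ⊆ Set.Icc 0 s := Set.Icc_subset_Icc zero_le_one le_rfl
      refine ⟨Ms 1, hMs1pos, ?_, ?_⟩
      · -- A bound
        have hM0m : (0:ℝ) < Ms 1 ^ m := Real.rpow_pos_of_pos hMs1pos _
        have hii1 : IntervalIntegrable (fun x => g x ^ m * Real.exp (-x)) volume 0 1 :=
          (hgm.mono (by rw [Set.uIcc_of_le (by norm_num : (0:ℝ) ≤ 1)]; exact hIcc01)).intervalIntegrable
        have hii2 : IntervalIntegrable (fun x => g x ^ m * Real.exp (-x)) volume 1 s :=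
          (hgm.mono (by rw [Set.uIcc_of_le hs1.le]; exact hIcc1s)).intervalIntegrable
        have hsplit : ∫ x in (0:ℝ)..s, g x ^ m * Real.exp (-x)
            = (∫ x in (0:ℝ)..1, g x ^ m * Real.exp (-x)) + ∫ x in (1:ℝ)..s, g x ^ m * Real.exp (-x) :=
          (intervalIntegral.integral_add_adjacent_intervals hii1 hii2).symm
        have hP1 : ∫ x in (0:ℝ)..1, g x ^ m * Real.exp (-x) ≤ (1 - Real.exp (-1)) * Ms 1 ^ m := by
          rw [intervalIntegral.integral_of_le (by norm_num : (0:ℝ) ≤ 1)]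
          have hint1 : IntegrableOn (fun x => g x ^ m * Real.exp (-x)) (Set.Ioc 0 1) :=
            ((hgm.mono hIcc01).integrableOn_Icc).mono_set Set.Ioc_subset_Icc_self
          have hint2 : IntegrableOn (fun x => Ms 1 ^ m * Real.exp (-x)) (Set.Ioc 0 1) :=
            ((continuous_const.mul (Real.continuous_exp.comp continuous_neg)).integrableOn_Icc).mono_set
              Set.Ioc_subset_Icc_self
          calc ∫ x in Set.Ioc (0:ℝ) 1, g x ^ m * Real.exp (-x)
              ≤ ∫ x in Set.Ioc (0:ℝ) 1, Ms 1 ^ m * Real.exp (-x) := by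
                refine setIntegral_mono_on hint1 hint2 measurableSet_Ioc (fun x hx => ?_)
                exact mul_le_mul_of_nonneg_right
                  (Real.rpow_le_rpow (hgpos x (hIcc01 ⟨hx.1.le, hx.2⟩)).le
                    (hub 1 hs1.le x ⟨hx.1.le, hx.2⟩) hm.le) (Real.exp_pos _).le
            _ = Ms 1 ^ m * (1 - Real.exp (-1)) := by rw [integral_const_mul, exp_Ioc zero_le_one]
            _ = (1 - Real.exp (-1)) * Ms 1 ^ m := by ring
        have hconvΓ : IntegrableOn (fun x : ℝ => Real.exp (-x) * x ^ (m*d)) (Set.Ioi 0) := by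
          have := Real.GammaIntegral_convergent (s := m*d+1) (by positivity)
          simpa using this
        have hΓint : Real.Gamma (m*d+1) = ∫ x in Set.Ioi (0:ℝ), Real.exp (-x) * x ^ (m*d) := by
          rw [Real.Gamma_eq_integral (by positivity : (0:ℝ) < m*d+1)]
          simp
        have hP2 : ∫ x in (1:ℝ)..s, g x ^ m * Real.exp (-x)
            ≤ (4:ℝ) ^ (m*d) * Ms 1 ^ m * Real.Gamma (m*d+1) := by
          rw [intervalIntegral.integral_of_le hs1.le]
          have hint1 : IntegrableOn (fun x => g x ^ m * Real.exp (-x)) (Set.Ioc 1 s) :=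
            ((hgm.mono hIcc1s).integrableOn_Icc).mono_set Set.Ioc_subset_Icc_self
          have hint2 : IntegrableOn (fun x : ℝ => (4:ℝ) ^ (m*d) * Ms 1 ^ m * (Real.exp (-x) * x ^ (m*d)))
              (Set.Ioc 1 s) :=
            ((hconvΓ.mono_set (fun x hx => lt_trans one_pos hx.1)).const_mul _)
          have hptA : ∀ x ∈ Set.Ioc (1:ℝ) s, g x ^ m * Real.exp (-x)
              ≤ (4:ℝ) ^ (m*d) * Ms 1 ^ m * (Real.exp (-x) * x ^ (m*d)) := by
            intro x hx
            have hx0 : (0:ℝ) < x := lt_trans one_pos hx.1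
            have hgx : g x ≤ (4 * x / 1) ^ d * Ms 1 := by
              calc g x ≤ Ms x := hub x hx.2 x ⟨hx0.le, le_rfl⟩
                _ ≤ (4 * x / 1) ^ d * Ms 1 := hF1 1 x one_pos hx.1.le hx.2
            have hgx' : g x ≤ (4 * x) ^ d * Ms 1 := by rwa [div_one] at hgx
            have h4x : (0:ℝ) ≤ (4 * x) ^ d := Real.rpow_nonneg (by positivity) _
            have hstep : g x ^ m ≤ ((4 * x) ^ d * Ms 1) ^ m :=
              Real.rpow_le_rpow (hgpos x (hIcc1s ⟨hx.1.le, hx.2⟩)).le hgx' hm.le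
            have hexpand : ((4 * x) ^ d * Ms 1) ^ m = (4:ℝ)^(m*d) * x ^ (m*d) * Ms 1 ^ m := by
              rw [Real.mul_rpow h4x hMs1pos.le, ← Real.rpow_mul (by positivity : (0:ℝ) ≤ 4*x),
                Real.mul_rpow (by norm_num : (0:ℝ) ≤ 4) hx0.le, mul_comm d m]
            calc g x ^ m * Real.exp (-x) ≤ ((4 * x) ^ d * Ms 1) ^ m * Real.exp (-x) :=
                  mul_le_mul_of_nonneg_right hstep (Real.exp_pos _).le
              _ = (4:ℝ)^(m*d) * x ^ (m*d) * Ms 1 ^ m * Real.exp (-x) := by rw [hexpand]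
              _ = (4:ℝ)^(m*d) * Ms 1 ^ m * (Real.exp (-x) * x ^ (m*d)) := by ring
          calc ∫ x in Set.Ioc (1:ℝ) s, g x ^ m * Real.exp (-x)
              ≤ ∫ x in Set.Ioc (1:ℝ) s, (4:ℝ)^(m*d) * Ms 1 ^ m * (Real.exp (-x) * x ^ (m*d)) :=
                setIntegral_mono_on hint1 hint2 measurableSet_Ioc hptA
            _ = (4:ℝ)^(m*d) * Ms 1 ^ m * ∫ x in Set.Ioc (1:ℝ) s, Real.exp (-x) * x ^ (m*d) :=
                integral_const_mul _ _
            _ ≤ (4:ℝ)^(m*d) * Ms 1 ^ m * ∫ x in Set.Ioi (0:ℝ), Real.exp (-x) * x ^ (m*d) := by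
                refine mul_le_mul_of_nonneg_left ?_ (by positivity)
                refine setIntegral_mono_set hconvΓ ?_
                  (HasSubset.Subset.eventuallyLE (fun x hx => lt_trans one_pos hx.1))
                filter_upwards [ae_restrict_mem measurableSet_Ioi] with x hx
                have := Real.rpow_nonneg (le_of_lt hx) (m*d)
                have := (Real.exp_pos (-x)).le
                positivity
            _ = (4:ℝ)^(m*d) * Ms 1 ^ m * Real.Gamma (m*d+1) := by rw [← hΓint]
        -- numeric combination
        have hDs : 1 - Real.exp (-1) ≤ 1 - Real.exp (-s) := by
          have : Real.exp (-s) ≤ Real.exp (-1) := Real.exp_le_exp.mpr (by linarith)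
          linarith
        have hXe : Real.exp (-1) ≤ (4:ℝ)^(m*d) * Real.Gamma (m*d+1) :=
          le_trans hΓe (le_mul_of_one_le_left hΓpos.le h4md1)
        have hnumA : (1 - Real.exp (-1)) + (4:ℝ)^(m*d) * Real.Gamma (m*d+1)
            ≤ 2 * Real.exp 1 * ((4:ℝ)^(m*d) * Real.Gamma (m*d+1)) * (1 - Real.exp (-s)) := by
          have hkey : (2 * Real.exp 1 - 3) * Real.exp (-1)
              ≤ (2 * Real.exp 1 - 3) * ((4:ℝ)^(m*d) * Real.Gamma (m*d+1)) :=
            mul_le_mul_of_nonneg_left hXe (by nlinarith)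
          have hstep : (1 - Real.exp (-1)) + (4:ℝ)^(m*d) * Real.Gamma (m*d+1)
              ≤ 2 * Real.exp 1 * ((4:ℝ)^(m*d) * Real.Gamma (m*d+1)) * (1 - Real.exp (-1)) := by
            nlinarith [hkey, hEe, he1ub, he1pos]
          have hmono2 : 2 * Real.exp 1 * ((4:ℝ)^(m*d) * Real.Gamma (m*d+1)) * (1 - Real.exp (-1))
              ≤ 2 * Real.exp 1 * ((4:ℝ)^(m*d) * Real.Gamma (m*d+1)) * (1 - Real.exp (-s)) := by
            refine mul_le_mul_of_nonneg_left hDs (by positivity)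
          linarith
        calc ∫ x in (0:ℝ)..s, g x ^ m * Real.exp (-x)
            = (∫ x in (0:ℝ)..1, g x ^ m * Real.exp (-x)) + ∫ x in (1:ℝ)..s, g x ^ m * Real.exp (-x) :=
              hsplit
          _ ≤ (1 - Real.exp (-1)) * Ms 1 ^ m + (4:ℝ)^(m*d) * Ms 1 ^ m * Real.Gamma (m*d+1) := by
              linarith [hP1, hP2]
          _ = ((1 - Real.exp (-1)) + (4:ℝ)^(m*d) * Real.Gamma (m*d+1)) * Ms 1 ^ m := by ring
          _ ≤ (2 * Real.exp 1 * ((4:ℝ)^(m*d) * Real.Gamma (m*d+1)) * (1 - Real.exp (-s))) * Ms 1 ^ m :=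
              mul_le_mul_of_nonneg_right hnumA hM0m.le
          _ = 2 * Real.exp 1 * (4:ℝ) ^ (m*d) * Real.Gamma (m*d+1) * (1 - Real.exp (-s)) * Ms 1 ^ m := by
              ring
      · -- B bound
        have hM0p : (0:ℝ) < Ms 1 ^ (-p) := Real.rpow_pos_of_pos hMs1pos _
        have hii1 : IntervalIntegrable (fun x => g x ^ (-p) * Real.exp (-x)) volume 0 1 :=
          (hgp.mono (by rw [Set.uIcc_of_le (by norm_num : (0:ℝ) ≤ 1)]; exact hIcc01)).intervalIntegrable
        have hii2 : IntervalIntegrable (fun x => g x ^ (-p) * Real.exp (-x)) volume 1 s :=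
          (hgp.mono (by rw [Set.uIcc_of_le hs1.le]; exact hIcc1s)).intervalIntegrable
        have hsplit : ∫ x in (0:ℝ)..s, g x ^ (-p) * Real.exp (-x)
            = (∫ x in (0:ℝ)..1, g x ^ (-p) * Real.exp (-x)) + ∫ x in (1:ℝ)..s, g x ^ (-p) * Real.exp (-x) :=
          (intervalIntegral.integral_add_adjacent_intervals hii1 hii2).symm
        have hQ1 : ∫ x in (0:ℝ)..1, g x ^ (-p) * Real.exp (-x)
            ≤ 4 ^ (p*d) / (1 - p*d) * Ms 1 ^ (-p) := by
          rw [intervalIntegral.integral_of_le (by norm_num : (0:ℝ) ≤ 1)]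
          have hint1 : IntegrableOn (fun x => g x ^ (-p) * Real.exp (-x)) (Set.Ioc 0 1) :=
            ((hgp.mono hIcc01).integrableOn_Icc).mono_set Set.Ioc_subset_Icc_self
          have hint2 : IntegrableOn (fun x => g x ^ (-p)) (Set.Ioc 0 1) :=
            ((hgp0.mono hIcc01).integrableOn_Icc).mono_set Set.Ioc_subset_Icc_self
          calc ∫ x in Set.Ioc (0:ℝ) 1, g x ^ (-p) * Real.exp (-x)
              ≤ ∫ x in Set.Ioc (0:ℝ) 1, g x ^ (-p) := by
                refine setIntegral_mono_on hint1 hint2 measurableSet_Ioc (fun x hx => ?_)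
                have h0 : 0 ≤ g x ^ (-p) := Real.rpow_nonneg (hgpos x (hIcc01 ⟨hx.1.le, hx.2⟩)).le _
                have he : Real.exp (-x) ≤ 1 := by
                  calc Real.exp (-x) ≤ Real.exp 0 := Real.exp_le_exp.mpr (by linarith [hx.1])
                    _ = 1 := Real.exp_zero
                nlinarith
            _ ≤ 4 ^ (p*d) / (1 - p*d) * 1 * Ms 1 ^ (-p) := hGb 1 one_pos hs1.le
            _ = 4 ^ (p*d) / (1 - p*d) * Ms 1 ^ (-p) := by ring
        -- the tail, summed over unit blocks
        set aseq : ℕ → ℝ := fun k => min (1 + (k:ℝ)) s with haseq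
        have hbounds : ∀ k : ℕ, 1 ≤ aseq k ∧ aseq k ≤ s := fun k =>
          ⟨le_min (by push_cast; linarith [Nat.cast_nonneg (α := ℝ) k]) hs1.le, min_le_right _ _⟩
        have hamono : ∀ k : ℕ, aseq k ≤ aseq (k+1) := fun k =>
          min_le_min (by push_cast; linarith) le_rfl
        have haseq0 : aseq 0 = 1 := by
          simp only [haseq, Nat.cast_zero, add_zero]
          exact min_eq_left hs1.le
        set K : ℕ := ⌈s⌉₊ with hK
        have haseqK : aseq K = s := by
          apply min_eq_right
          calc s ≤ (K:ℝ) := Nat.le_ceil s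
            _ ≤ 1 + (K:ℝ) := by linarith
        have hii : ∀ k : ℕ, IntervalIntegrable (fun x => g x ^ (-p) * Real.exp (-x)) volume
            (aseq k) (aseq (k+1)) := by
          intro k
          refine (hgp.mono ?_).intervalIntegrable
          rw [Set.uIcc_of_le (hamono k)]
          intro z hz
          exact ⟨le_trans (by linarith [(hbounds k).1]) hz.1, le_trans hz.2 (hbounds (k+1)).2⟩
        have hsplit2 : ∫ x in (1:ℝ)..s, g x ^ (-p) * Real.exp (-x)
            = ∑ k ∈ Finset.range K, ∫ x in aseq k..aseq (k+1), g x ^ (-p) * Real.exp (-x) := by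
          rw [intervalIntegral.sum_integral_adjacent_intervals (fun k _ => hii k), haseq0, haseqK]
        have hblock : ∀ k : ℕ, ∫ x in aseq k..aseq (k+1), g x ^ (-p) * Real.exp (-x)
            ≤ 4 ^ (p*d) / (1 - p*d) * Ms 1 ^ (-p) * (((k:ℝ)+2) * Real.exp (-1) ^ (k+1)) := by
          intro k
          have hbndpos : (0:ℝ) ≤ 4 ^ (p*d) / (1 - p*d) * Ms 1 ^ (-p) *
              (((k:ℝ)+2) * Real.exp (-1) ^ (k+1)) := by positivity
          rcases eq_or_lt_of_le (hamono k) with heq | hlt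
          · rw [← heq, intervalIntegral.integral_same]; exact hbndpos
          · have hk1s : 1 + (k:ℝ) ≤ s := by
              by_contra hgt
              push_neg at hgt
              have h1 : aseq k = s := min_eq_right hgt.le
              have h2 : aseq (k+1) ≤ s := min_le_right _ _
              rw [h1] at hlt; linarith
            have hak1 : aseq k = 1 + (k:ℝ) := min_eq_left hk1s
            have hakpos : (0:ℝ) < aseq k := by rw [hak1]; positivity
            have hak2 : aseq (k+1) ≤ (k:ℝ) + 2 := by
              calc aseq (k+1) ≤ 1 + ((k:ℕ)+1 : ℕ) := min_le_left _ _
                _ = (k:ℝ) + 2 := by push_cast; ring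
            have hsub : Set.Ioc (aseq k) (aseq (k+1)) ⊆ Set.Ioc 0 (aseq (k+1)) :=
              Set.Ioc_subset_Ioc hakpos.le le_rfl
            have hintp : IntegrableOn (fun x => g x ^ (-p)) (Set.Ioc 0 (aseq (k+1))) :=
              ((hgp0.mono (Set.Icc_subset_Icc le_rfl (hbounds (k+1)).2)).integrableOn_Icc).mono_set
                Set.Ioc_subset_Icc_self
            have hint1 : IntegrableOn (fun x => g x ^ (-p) * Real.exp (-x))
                (Set.Ioc (aseq k) (aseq (k+1))) := by
              refine ((hgp.mono ?_).integrableOn_Icc).mono_set Set.Ioc_subset_Icc_self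
              exact Set.Icc_subset_Icc (by linarith [(hbounds k).1]) (hbounds (k+1)).2
            have hint2 : IntegrableOn (fun x => Real.exp (-(1+(k:ℝ))) * g x ^ (-p))
                (Set.Ioc (aseq k) (aseq (k+1))) := (hintp.mono_set hsub).const_mul _
            have hexpk : Real.exp (-(1+(k:ℝ))) = Real.exp (-1) ^ (k+1) := by
              rw [← Real.exp_nat_mul]
              congr 1
              push_cast
              ring
            rw [intervalIntegral.integral_of_le (hamono k)]
            calc ∫ x in Set.Ioc (aseq k) (aseq (k+1)), g x ^ (-p) * Real.exp (-x)
                ≤ ∫ x in Set.Ioc (aseq k) (aseq (k+1)), Real.exp (-(1+(k:ℝ))) * g x ^ (-p) := by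
                  refine setIntegral_mono_on hint1 hint2 measurableSet_Ioc (fun x hx => ?_)
                  have hgx0 : 0 ≤ g x ^ (-p) := Real.rpow_nonneg
                    (hgpos x ⟨by linarith [hx.1, (hbounds k).1, hakpos],
                      le_trans hx.2 (hbounds (k+1)).2⟩).le _
                  have hex : Real.exp (-x) ≤ Real.exp (-(1+(k:ℝ))) := by
                    refine Real.exp_le_exp.mpr ?_
                    have := hx.1
                    rw [hak1] at this
                    linarith
                  calc g x ^ (-p) * Real.exp (-x) ≤ g x ^ (-p) * Real.exp (-(1+(k:ℝ))) :=
                        mul_le_mul_of_nonneg_left hex hgx0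
                    _ = Real.exp (-(1+(k:ℝ))) * g x ^ (-p) := by ring
              _ = Real.exp (-(1+(k:ℝ))) * ∫ x in Set.Ioc (aseq k) (aseq (k+1)), g x ^ (-p) :=
                  integral_const_mul _ _
              _ ≤ Real.exp (-(1+(k:ℝ))) * ∫ x in Set.Ioc 0 (aseq (k+1)), g x ^ (-p) := by
                  refine mul_le_mul_of_nonneg_left ?_ (Real.exp_pos _).le
                  refine setIntegral_mono_set hintp ?_ (HasSubset.Subset.eventuallyLE hsub)
                  filter_upwards [ae_restrict_mem measurableSet_Ioc] with x hx
                  exact Real.rpow_nonneg (hgpos x ⟨hx.1.le, le_trans hx.2 (hbounds (k+1)).2⟩).le _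
              _ ≤ Real.exp (-(1+(k:ℝ))) *
                  (4 ^ (p*d) / (1 - p*d) * aseq (k+1) * Ms (aseq (k+1)) ^ (-p)) := by
                  refine mul_le_mul_of_nonneg_left ?_ (Real.exp_pos _).le
                  exact hGb (aseq (k+1)) (by linarith [(hbounds (k+1)).1]) (hbounds (k+1)).2
              _ ≤ Real.exp (-(1+(k:ℝ))) * (4 ^ (p*d) / (1 - p*d) * ((k:ℝ)+2) * Ms 1 ^ (-p)) := by
                  refine mul_le_mul_of_nonneg_left ?_ (Real.exp_pos _).le
                  have hMsle' : Ms (aseq (k+1)) ^ (-p) ≤ Ms 1 ^ (-p) :=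
                    Real.rpow_le_rpow_of_nonpos hMs1pos
                      (hMmono 1 (aseq (k+1)) zero_le_one (hbounds (k+1)).1 (hbounds (k+1)).2)
                      (by linarith)
                  have h1 : 4 ^ (p*d) / (1 - p*d) * aseq (k+1) ≤ 4 ^ (p*d) / (1 - p*d) * ((k:ℝ)+2) :=
                    mul_le_mul_of_nonneg_left hak2 hC1pos.le
                  refine mul_le_mul h1 hMsle' (Real.rpow_nonneg (hMpos (aseq (k+1))
                    (by linarith [(hbounds (k+1)).1]) (hbounds (k+1)).2).le _) (by positivity)
              _ = 4 ^ (p*d) / (1 - p*d) * Ms 1 ^ (-p) * (((k:ℝ)+2) * Real.exp (-1) ^ (k+1)) := by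
                  rw [hexpk]; ring
        have hxlt : |Real.exp (-1)| < 1 := by
          rw [abs_of_pos he1pos]
          exact Real.exp_lt_one_iff.mpr (by norm_num)
        have hhs := hasSum_aux hxlt
        have htail : ∫ x in (1:ℝ)..s, g x ^ (-p) * Real.exp (-x)
            ≤ 4 ^ (p*d) / (1 - p*d) * Ms 1 ^ (-p) *
              (Real.exp (-1) * (Real.exp (-1) / (1 - Real.exp (-1))^2)
                + 2 * Real.exp (-1) * (1 - Real.exp (-1))⁻¹) := by
          rw [hsplit2]
          calc ∑ k ∈ Finset.range K, ∫ x in aseq k..aseq (k+1), g x ^ (-p) * Real.exp (-x)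
              ≤ ∑ k ∈ Finset.range K,
                  4 ^ (p*d) / (1 - p*d) * Ms 1 ^ (-p) * (((k:ℝ)+2) * Real.exp (-1) ^ (k+1)) :=
                Finset.sum_le_sum (fun k _ => hblock k)
            _ = 4 ^ (p*d) / (1 - p*d) * Ms 1 ^ (-p) *
                ∑ k ∈ Finset.range K, (((k:ℝ)+2) * Real.exp (-1) ^ (k+1)) := by
                rw [Finset.mul_sum]
            _ ≤ _ := by
                refine mul_le_mul_of_nonneg_left ?_ (by positivity)
                refine le_trans (Summable.sum_le_tsum (Finset.range K) (fun i _ => by positivity)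
                  hhs.summable) ?_
                rw [hhs.tsum_eq]
        -- numerics for the B bound
        have hD : 0 < 1 - Real.exp (-1) := by linarith
        have hDs : 1 - Real.exp (-1) ≤ 1 - Real.exp (-s) := by
          have : Real.exp (-s) ≤ Real.exp (-1) := Real.exp_le_exp.mpr (by linarith)
          linarith
        have hnumB : 1 + (Real.exp (-1) * (Real.exp (-1) / (1 - Real.exp (-1))^2)
            + 2 * Real.exp (-1) * (1 - Real.exp (-1))⁻¹) ≤ 2 * Real.exp 1 * (1 - Real.exp (-s)) := by
          set e1 := Real.exp (-1) with he1def
          have hVD : (1 + (e1 * (e1 / (1 - e1)^2) + 2 * e1 * (1 - e1)⁻¹)) * (1-e1)^2 = 1 := by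
            field_simp
            ring
          have hcube : (0.632:ℝ)^3 ≤ (1-e1)^3 := by
            refine pow_le_pow_left₀ (by norm_num) (by linarith [he1ub]) 3
          have h2ED : (1:ℝ) ≤ 2 * Real.exp 1 * (1-e1)^3 := by nlinarith [hcube, hE1, hD]
          have hq1 : (1 + (e1 * (e1 / (1 - e1)^2) + 2 * e1 * (1 - e1)⁻¹)) = 1 / (1-e1)^2 := by
            rw [eq_div_iff (by positivity)]
            exact hVD
          rw [hq1, div_le_iff₀ (by positivity)]
          have hprod : 2 * Real.exp 1 * (1-e1)^3 ≤ 2 * Real.exp 1 * (1 - Real.exp (-s)) * (1-e1)^2 := by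
            have : (1-e1)^3 = (1-e1) * (1-e1)^2 := by ring
            rw [this]
            nlinarith [hDs, hD, hE0, sq_nonneg (1-e1)]
          linarith
        have hQsum : ∫ x in (0:ℝ)..s, g x ^ (-p) * Real.exp (-x)
            ≤ 4 ^ (p*d) / (1 - p*d) * Ms 1 ^ (-p) *
              (1 + (Real.exp (-1) * (Real.exp (-1) / (1 - Real.exp (-1))^2)
                + 2 * Real.exp (-1) * (1 - Real.exp (-1))⁻¹)) := by
          rw [hsplit]
          have := hQ1
          have := htail
          nlinarith [hQ1, htail]
        calc ∫ x in (0:ℝ)..s, g x ^ (-p) * Real.exp (-x)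
            ≤ 4 ^ (p*d) / (1 - p*d) * Ms 1 ^ (-p) *
              (1 + (Real.exp (-1) * (Real.exp (-1) / (1 - Real.exp (-1))^2)
                + 2 * Real.exp (-1) * (1 - Real.exp (-1))⁻¹)) := hQsum
          _ ≤ 4 ^ (p*d) / (1 - p*d) * Ms 1 ^ (-p) * (2 * Real.exp 1 * (1 - Real.exp (-s))) :=
              mul_le_mul_of_nonneg_left hnumB (by positivity)
          _ = 2 * Real.exp 1 * ((4:ℝ) ^ (p*d) / (1 - p*d)) * (1 - Real.exp (-s)) * Ms 1 ^ (-p) := by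
              ring
  -- final assembly
  obtain ⟨M0, hM0, hA, hB⟩ := main
  have hA0 : 0 ≤ ∫ x in (0:ℝ)..s, g x ^ m * Real.exp (-x) := by
    refine intervalIntegral.integral_nonneg hs.le (fun u hu => ?_)
    have := Real.rpow_nonneg (hgpos u hu).le m
    positivity
  have hB0 : 0 ≤ ∫ x in (0:ℝ)..s, g x ^ (-p) * Real.exp (-x) := by
    refine intervalIntegral.integral_nonneg hs.le (fun u hu => ?_)
    have := Real.rpow_nonneg (hgpos u hu).le (-p)
    positivity
  set Ca : ℝ := 2 * Real.exp 1 * (4:ℝ) ^ (m*d) * Real.Gamma (m*d+1) * (1 - Real.exp (-s)) * M0 ^ m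
    with hCadef
  set Cb : ℝ := 2 * Real.exp 1 * ((4:ℝ) ^ (p*d) / (1 - p*d)) * (1 - Real.exp (-s)) * M0 ^ (-p)
    with hCbdef
  have hM0m : (0:ℝ) < M0 ^ m := Real.rpow_pos_of_pos hM0 _
  have hM0p : (0:ℝ) < M0 ^ (-p) := Real.rpow_pos_of_pos hM0 _
  have h4pd : (0:ℝ) < (4:ℝ) ^ (p*d) := Real.rpow_pos_of_pos (by norm_num) _
  have h4md : (0:ℝ) < (4:ℝ) ^ (m*d) := Real.rpow_pos_of_pos (by norm_num) _
  have hCa0 : 0 < Ca := by rw [hCadef]; positivity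
  have hCb0 : 0 < Cb := by rw [hCbdef]; positivity
  have hstep : (∫ x in (0:ℝ)..s, g x ^ m * Real.exp (-x)) ^ n *
      (∫ x in (0:ℝ)..s, g x ^ (-p) * Real.exp (-x)) ^ q ≤ Ca ^ n * Cb ^ q := by
    refine mul_le_mul (Real.rpow_le_rpow hA0 hA hn.le) (Real.rpow_le_rpow hB0 hB hq.le)
      (Real.rpow_nonneg hB0 _) (Real.rpow_nonneg hCa0.le _)
  refine le_trans hstep (le_of_eq ?_)
  -- now prove `Ca ^ n * Cb ^ q = RHS`
  have hEsp : (0:ℝ) ≤ 1 - Real.exp (-s) := hEspos.le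
  have e2 : (0:ℝ) < 2 * Real.exp 1 := by positivity
  rw [hCadef, hCbdef]
  rw [Real.mul_rpow (by positivity) (Real.rpow_nonneg hM0.le m),
    Real.mul_rpow (by positivity) hEsp,
    Real.mul_rpow (by positivity) hΓpos.le,
    Real.mul_rpow e2.le h4md.le]
  rw [Real.mul_rpow (by positivity) (Real.rpow_nonneg hM0.le (-p)),
    Real.mul_rpow (by positivity) hEsp,
    Real.mul_rpow e2.le (by positivity : (0:ℝ) ≤ (4:ℝ)^(p*d) / (1-p*d))]
  rw [Real.div_rpow h4pd.le h1pd.le]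
  rw [← Real.rpow_mul (by norm_num : (0:ℝ) ≤ 4), ← Real.rpow_mul (by norm_num : (0:ℝ) ≤ 4),
    ← Real.rpow_mul hM0.le, ← Real.rpow_mul hM0.le]
  rw [Real.rpow_add e2, Real.rpow_add hEspos]
  rw [show (m*n+p*q)*d = m*d*n + p*d*q by ring, Real.rpow_add (by norm_num : (0:ℝ) < 4)]
  have hM0cancel : M0 ^ (m*n) * M0 ^ (-p*q) = 1 := by
    rw [← Real.rpow_add hM0]
    rw [show m*n + -p*q = m*n - p*q by ring, hmn, sub_self, Real.rpow_zero]
  linear_combination ((2 * Real.exp 1) ^ n * (4:ℝ) ^ (m*d*n) * Real.Gamma (m*d+1) ^ n *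
    (1 - Real.exp (-s)) ^ n) * ((2 * Real.exp 1) ^ q * ((4:ℝ) ^ (p*d*q) / (1 - p*d) ^ q) *
    (1 - Real.exp (-s)) ^ q) * hM0cancel
end
end

section
/- Let d > 0, 0 < s ≤ 1, and let g : [0,s] → (0,∞) be a continuous function such that for every Lebesgue-measurable subset ω ⊆ [0,s] with |ω| > 0, sup_{[0,s]} g ≤ (4s/|ω|)^d · sup_ω g. Let m, n, p, q > 0 be reals with m·n = p·q and p·d < 1. Then (∫_0^s g(x)^m e^{−x} dx)^n · (∫_0^s g(x)^{−p} e^{−x} dx)^q ≤ 4^{p q d} · (2(1 − e^{−s}))^{n+q} · (1/(1 − p d))^q. -/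
open MeasureTheory

noncomputable section

private lemma s_le_two_sub (s : ℝ) (hs : 0 < s) (hs1 : s ≤ 1) :
    s ≤ 2 * (1 - Real.exp (-s)) := by
  have h1 : s + 1 ≤ Real.exp s := Real.add_one_le_exp s
  have h2 : Real.exp (-s) = (Real.exp s)⁻¹ := Real.exp_neg s
  have h3 : (Real.exp s)⁻¹ ≤ (s + 1)⁻¹ := by
    apply inv_anti₀ (by linarith) h1
  have h4 : Real.exp (-s) ≤ (s + 1)⁻¹ := h2 ▸ h3
  have h5 : (s + 1) * (s + 1)⁻¹ = 1 := mul_inv_cancel₀ (by linarith)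
  nlinarith [h4, h5]

/-- The case `0 < s ≤ 1` in the proof of Theorem 1.5: if `g > 0` is continuous on `[0,s]`
and satisfies the Remez-type inequality with exponent `d` on `[0,s]`, then for
`m·n = p·q`, `p·d < 1`,
`(∫_0^s g^m e^{−x})^n (∫_0^s g^{−p} e^{−x})^q ≤ 4^{pqd} (2(1−e^{−s}))^{n+q} (1/(1−pd))^q`. -/
theorem needle_inequality_small (d s : ℝ) (hd : 0 < d) (hs : 0 < s) (hs1 : s ≤ 1)
    (g : ℝ → ℝ) (hg : ContinuousOn g (Set.Icc 0 s))
    (hgpos : ∀ x ∈ Set.Icc (0 : ℝ) s, 0 < g x)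
    -- the Remez-type condition on `[0,s]`
    (hrem : ∀ ω : Set ℝ, ω ⊆ Set.Icc (0 : ℝ) s → MeasurableSet ω → 0 < volume ω →
      (⨆ x ∈ Set.Icc (0 : ℝ) s, g x) ≤
        (4 * s / (volume ω).toReal) ^ d * ⨆ x ∈ ω, g x)
    (m n p q : ℝ) (hm : 0 < m) (hn : 0 < n) (hp : 0 < p) (hq : 0 < q)
    (hmn : m * n = p * q) (hpd : p * d < 1) :
    (∫ x in (0 : ℝ)..s, g x ^ m * Real.exp (-x)) ^ n *
        (∫ x in (0 : ℝ)..s, g x ^ (-p) * Real.exp (-x)) ^ q ≤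
      (4 : ℝ) ^ (p * q * d) * (2 * (1 - Real.exp (-s))) ^ (n + q) *
        (1 / (1 - p * d)) ^ q := by
  have hIne : (Set.Icc (0:ℝ) s).Nonempty := Set.nonempty_Icc.2 hs.le
  set I : Set ℝ := Set.Icc (0:ℝ) s with hIdef
  have hImeas : MeasurableSet I := measurableSet_Icc
  set M : ℝ := ⨆ x ∈ I, g x with hMdef
  -- bound on g and on the sup
  obtain ⟨K, hK⟩ : BddAbove (g '' I) := isCompact_Icc.bddAbove_image hg
  have hFbdd : ∀ x : ℝ, (⨆ _ : x ∈ I, g x) ≤ max K 0 := by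
    intro x
    refine Real.iSup_le (fun hx => le_max_of_le_left (hK ⟨x, hx, rfl⟩)) (le_max_right _ _)
  have hgle : ∀ x ∈ I, g x ≤ M := by
    intro x hx
    have h1 : (⨆ _ : x ∈ I, g x) = g x := ciSup_pos (f := fun _ : x ∈ I => g x) hx
    rw [← h1]
    exact le_ciSup ⟨max K 0, Set.forall_mem_range.2 hFbdd⟩ x
  have hM0 : 0 < M := lt_of_lt_of_le (hgpos 0 (Set.left_mem_Icc.2 hs.le))
      (hgle 0 (Set.left_mem_Icc.2 hs.le))
  -- measure of sublevel sets
  have meas_bound : ∀ c : ℝ, 0 < c → c < M →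
      volume (I ∩ {x | g x ≤ c}) ≤ ENNReal.ofReal (4 * s * (c / M) ^ (1/d)) := by
    intro c hc hcM
    set ω := I ∩ {x | g x ≤ c} with hωdef
    have hωmeas : MeasurableSet ω :=
      (hg.preimage_isClosed_of_isClosed isClosed_Icc isClosed_Iic).measurableSet
    by_cases hω0 : volume ω = 0
    · rw [hω0]; exact zero_le
    have hωpos : 0 < volume ω := pos_iff_ne_zero.2 hω0
    have hωfin : volume ω ≠ ⊤ := by
      refine ne_top_of_le_ne_top ?_ (measure_mono Set.inter_subset_left)
      rw [Real.volume_Icc]; exact ENNReal.ofReal_ne_top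
    have hrem' := hrem ω Set.inter_subset_left hωmeas hωpos
    have hsupω : (⨆ x ∈ ω, g x) ≤ c :=
      Real.iSup_le (fun x => Real.iSup_le (fun hx => hx.2) hc.le) hc.le
    set v := (volume ω).toReal with hvdef
    have hv0 : 0 < v := ENNReal.toReal_pos hω0 hωfin
    have hMle : M ≤ (4 * s / v) ^ d * c := by
      refine hrem'.trans (mul_le_mul_of_nonneg_left hsupω ?_)
      exact Real.rpow_nonneg (by positivity) d
    have h1 : M / c ≤ (4 * s / v) ^ d := by
      rw [div_le_iff₀ hc]; linarith [hMle]
    have h2 : ((4 * s / v) ^ d)⁻¹ ≤ c / M := by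
      have := inv_anti₀ (div_pos hM0 hc) h1
      rwa [inv_div] at this
    have h3 : (v / (4 * s)) ^ d ≤ c / M := by
      rw [show v / (4 * s) = (4 * s / v)⁻¹ by rw [inv_div],
        Real.inv_rpow (by positivity) d]
      exact h2
    have h4 : v / (4 * s) ≤ (c / M) ^ (1/d) := by
      have := Real.rpow_le_rpow (Real.rpow_nonneg (by positivity) d) h3 (by positivity : (0:ℝ) ≤ 1/d)
      rwa [← Real.rpow_mul (by positivity : (0:ℝ) ≤ v / (4*s)) d (1/d), mul_one_div,
        div_self hd.ne', Real.rpow_one] at this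
    have h5 : v ≤ 4 * s * (c / M) ^ (1/d) := by
      rw [div_le_iff₀ (by positivity : (0:ℝ) < 4 * s)] at h4
      linarith [h4]
    calc volume ω = ENNReal.ofReal v := (ENNReal.ofReal_toReal hωfin).symm
      _ ≤ _ := ENNReal.ofReal_le_ofReal h5
  -- notation
  set u := p * d with hudef
  have hu0 : 0 < u := mul_pos hp hd
  have hu1 : u < 1 := hpd
  set T : ℝ := (4:ℝ) ^ u * M ^ (-p) with hTdef
  have hT0 : 0 < T := by positivity
  set r : ℝ := -(1/u) with hrdef
  have h1u : 1 < 1/u := by rw [lt_div_iff₀ hu0]; linarith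
  have hr : r < -1 := neg_lt_neg h1u
  set C : ℝ := 4 * s * M ^ (-(1/d)) with hCdef
  have hC0 : 0 < C := by positivity
  -- measurability facts
  have hrpmeas : Measurable fun y : ℝ => y ^ (-p) := by fun_prop
  have hgae : AEMeasurable g (volume.restrict I) := hg.aemeasurable hImeas
  have hfae : AEMeasurable (fun x => g x ^ (-p)) (volume.restrict I) :=
    hrpmeas.comp_aemeasurable hgae
  have f_nn : 0 ≤ᵐ[volume.restrict I] fun x => g x ^ (-p) := by
    filter_upwards [ae_restrict_mem hImeas] with x hx
    exact (Real.rpow_pos_of_pos (hgpos x hx) _).le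
  have key := lintegral_eq_lintegral_meas_lt (volume.restrict I) f_nn hfae
  have hsplit : Set.Ioi (0:ℝ) = Set.Ioc 0 T ∪ Set.Ioi T :=
    (Set.Ioc_union_Ioi_eq_Ioi hT0.le).symm
  -- piece 1
  have piece1 : ∫⁻ t in Set.Ioc (0:ℝ) T, (volume.restrict I) {a | t < g a ^ (-p)}
      ≤ ENNReal.ofReal s * ENNReal.ofReal T := by
    have hb : ∀ t : ℝ, (volume.restrict I) {a | t < g a ^ (-p)} ≤ ENNReal.ofReal s := by
      intro t
      rw [Measure.restrict_apply' hImeas]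
      calc volume ({a | t < g a ^ (-p)} ∩ I) ≤ volume I :=
            measure_mono Set.inter_subset_right
        _ = ENNReal.ofReal s := by rw [hIdef, Real.volume_Icc, sub_zero]
    calc ∫⁻ t in Set.Ioc (0:ℝ) T, (volume.restrict I) {a | t < g a ^ (-p)}
        ≤ ∫⁻ _ in Set.Ioc (0:ℝ) T, ENNReal.ofReal s := lintegral_mono fun t => hb t
      _ = ENNReal.ofReal s * volume (Set.Ioc (0:ℝ) T) := setLIntegral_const _ _
      _ = ENNReal.ofReal s * ENNReal.ofReal T := by rw [Real.volume_Ioc, sub_zero]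
  -- piece 2 pointwise bound
  have hnegp : -(1/p) < 0 := by
    rw [neg_lt, neg_zero]; positivity
  have piece2pt : ∀ t ∈ Set.Ioi T, (volume.restrict I) {a | t < g a ^ (-p)}
      ≤ ENNReal.ofReal (C * t ^ r) := by
    intro t ht
    rw [Set.mem_Ioi] at ht
    have h0t : 0 < t := hT0.trans ht
    set c : ℝ := t ^ (-(1/p)) with hcdef
    have hc0 : 0 < c := Real.rpow_pos_of_pos h0t _
    have hcM : c < M := by
      have h1 : T ^ (-(1/p)) = (4:ℝ) ^ (-d) * M := by
        rw [hTdef, Real.mul_rpow (by positivity) (by positivity),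
          ← Real.rpow_mul (by norm_num : (0:ℝ) ≤ 4), ← Real.rpow_mul hM0.le,
          show u * -(1/p) = -d by rw [hudef]; field_simp; try ring,
          show -p * -(1/p) = 1 by field_simp, Real.rpow_one]
      have h2 : c < T ^ (-(1/p)) := Real.rpow_lt_rpow_of_neg hT0 ht hnegp
      have h3 : (4:ℝ) ^ (-d) < 1 :=
        Real.rpow_lt_one_of_one_lt_of_neg (by norm_num) (by linarith)
      calc c < T ^ (-(1/p)) := h2
        _ = (4:ℝ) ^ (-d) * M := h1
        _ < 1 * M := by exact mul_lt_mul_of_pos_right h3 hM0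
        _ = M := one_mul M
    have hsub : {a | t < g a ^ (-p)} ∩ I ⊆ I ∩ {x | g x ≤ c} := by
      rintro a ⟨hta, haI⟩
      refine ⟨haI, ?_⟩
      have hga : 0 < g a := hgpos a haI
      have h1 : (g a ^ (-p)) ^ (-(1/p)) < c := Real.rpow_lt_rpow_of_neg h0t hta hnegp
      rw [← Real.rpow_mul hga.le, show -p * -(1/p) = 1 by field_simp, Real.rpow_one] at h1
      exact h1.le
    have heq : 4 * s * (c / M) ^ (1/d) = C * t ^ r := by
      rw [hcdef, Real.div_rpow (Real.rpow_nonneg h0t.le _) hM0.le,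
        ← Real.rpow_mul h0t.le, show -(1/p) * (1/d) = r by rw [hrdef, hudef]; field_simp,
        hCdef, Real.rpow_neg hM0.le, div_eq_mul_inv]
      ring
    calc (volume.restrict I) {a | t < g a ^ (-p)}
        = volume ({a | t < g a ^ (-p)} ∩ I) := Measure.restrict_apply' hImeas
      _ ≤ volume (I ∩ {x | g x ≤ c}) := measure_mono hsub
      _ ≤ ENNReal.ofReal (4 * s * (c / M) ^ (1/d)) := meas_bound c hc0 hcM
      _ = ENNReal.ofReal (C * t ^ r) := by rw [heq]
  -- piece 2 integral value
  have hInt : IntegrableOn (fun t : ℝ => C * t ^ r) (Set.Ioi T) :=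
    (integrableOn_Ioi_rpow_of_lt hr hT0).const_mul C
  have hnn2 : 0 ≤ᵐ[volume.restrict (Set.Ioi T)] fun t : ℝ => C * t ^ r := by
    filter_upwards [ae_restrict_mem measurableSet_Ioi] with t ht
    exact mul_nonneg hC0.le (Real.rpow_nonneg (hT0.trans ht).le r)
  have piece2val : ∫⁻ t in Set.Ioi T, ENNReal.ofReal (C * t ^ r)
      = ENNReal.ofReal (C * (-T ^ (r+1) / (r+1))) := by
    rw [← ofReal_integral_eq_lintegral_ofReal hInt hnn2,
      integral_const_mul C fun t => t ^ r, integral_Ioi_rpow_of_lt hr hT0]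
  have piece2 : ∫⁻ t in Set.Ioi T, (volume.restrict I) {a | t < g a ^ (-p)}
      ≤ ENNReal.ofReal (C * (-T ^ (r+1) / (r+1))) := by
    rw [← piece2val]
    exact setLIntegral_mono' measurableSet_Ioi piece2pt
  -- real arithmetic for the total bound
  have hr1 : r + 1 = (u - 1)/u := by rw [hrdef]; field_simp; try ring
  have eT : T ^ (r+1) = (4:ℝ) ^ (u-1) * M ^ (1/d - p) := by
    rw [hTdef, Real.mul_rpow (by positivity) (by positivity),
      ← Real.rpow_mul (by norm_num : (0:ℝ) ≤ 4), ← Real.rpow_mul hM0.le,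
      show u * (r+1) = u - 1 by rw [hr1]; field_simp,
      show -p * (r+1) = 1/d - p by rw [hr1, hudef]; field_simp; ring]
  have e4 : (4:ℝ) ^ (u-1) * 4 = (4:ℝ) ^ u := by
    have h := Real.rpow_add (show (0:ℝ) < 4 by norm_num) (u-1) 1
    rw [Real.rpow_one] at h
    rw [show u - 1 + 1 = u by ring] at h
    exact h.symm
  have eM : M ^ (-(1/d)) * M ^ (1/d - p) = M ^ (-p) := by
    rw [← Real.rpow_add hM0]; ring_nf
  have eC : C * T ^ (r+1) = (4:ℝ) ^ u * s * M ^ (-p) := by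
    rw [hCdef, eT]
    calc 4 * s * M ^ (-(1/d)) * ((4:ℝ) ^ (u-1) * M ^ (1/d - p))
        = ((4:ℝ) ^ (u-1) * 4) * s * (M ^ (-(1/d)) * M ^ (1/d - p)) := by ring
      _ = (4:ℝ) ^ u * s * M ^ (-p) := by rw [e4, eM]
  have eneg : -(1/(r+1)) = u/(1-u) := by
    rw [hr1, one_div_div, show (1:ℝ) - u = -(u-1) by ring, div_neg]
  have hX : C * (-T ^ (r+1) / (r+1)) = ((4:ℝ) ^ u * s * M ^ (-p)) * (u/(1-u)) := by
    have : C * (-T ^ (r+1) / (r+1)) = (C * T ^ (r+1)) * (-(1/(r+1))) := by ring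
    rw [this, eC, eneg]
  have key_eq : s * T + C * (-T ^ (r+1) / (r+1)) = (4:ℝ) ^ u * s * M ^ (-p) / (1-u) := by
    rw [hX, hTdef]
    have h1mu : (0:ℝ) < 1 - p * d := by rw [← hudef]; linarith
    have h1mu' : (1:ℝ) - u ≠ 0 := by linarith
    field_simp
    ring
  -- total lintegral bound
  set B : ℝ := (4:ℝ) ^ u * s * M ^ (-p) / (1-u) with hBdef
  have hB0 : 0 < B := by
    have : 0 < 1 - u := by linarith
    positivity
  have main2 : ∫⁻ x in I, ENNReal.ofReal (g x ^ (-p)) ≤ ENNReal.ofReal B := by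
    rw [key, hsplit, lintegral_union measurableSet_Ioi (Set.Ioc_disjoint_Ioi le_rfl)]
    have hXnn : 0 ≤ C * (-T ^ (r+1) / (r+1)) := by
      rw [hX]
      have : 0 < 1 - u := by linarith
      positivity
    calc _ ≤ ENNReal.ofReal s * ENNReal.ofReal T
          + ENNReal.ofReal (C * (-T ^ (r+1) / (r+1))) := add_le_add piece1 piece2
      _ = ENNReal.ofReal (s * T + C * (-T ^ (r+1) / (r+1))) := by
          rw [← ENNReal.ofReal_mul hs.le, ← ENNReal.ofReal_add (by positivity) hXnn]
      _ = ENNReal.ofReal B := by rw [key_eq]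
  -- I₂ bound
  have hexpcont : ContinuousOn (fun x : ℝ => Real.exp (-x)) I :=
    (Real.continuous_exp.comp continuous_neg).continuousOn
  have hI2 : ∫ x in (0:ℝ)..s, g x ^ (-p) * Real.exp (-x) ≤ B := by
    rw [intervalIntegral.integral_of_le hs.le]
    have hg2 : AEMeasurable g (volume.restrict (Set.Ioc 0 s)) :=
      (hg.mono Set.Ioc_subset_Icc_self).aemeasurable measurableSet_Ioc
    have hmble : AEStronglyMeasurable (fun x => g x ^ (-p) * Real.exp (-x))
        (volume.restrict (Set.Ioc 0 s)) :=
      ((hrpmeas.comp_aemeasurable hg2).mul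
        ((Real.continuous_exp.comp continuous_neg).measurable.aemeasurable)).aestronglyMeasurable
    have nn : 0 ≤ᵐ[volume.restrict (Set.Ioc 0 s)] fun x => g x ^ (-p) * Real.exp (-x) := by
      filter_upwards [ae_restrict_mem measurableSet_Ioc] with x hx
      exact mul_nonneg (Real.rpow_nonneg (hgpos x (Set.Ioc_subset_Icc_self hx)).le _)
        (Real.exp_pos _).le
    rw [integral_eq_lintegral_of_nonneg_ae nn hmble]
    apply ENNReal.toReal_le_of_le_ofReal hB0.le
    calc ∫⁻ x in Set.Ioc (0:ℝ) s, ENNReal.ofReal (g x ^ (-p) * Real.exp (-x))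
        ≤ ∫⁻ x in Set.Ioc (0:ℝ) s, ENNReal.ofReal (g x ^ (-p)) := by
          refine setLIntegral_mono' measurableSet_Ioc fun x hx => ?_
          refine ENNReal.ofReal_le_ofReal ?_
          have h1 : Real.exp (-x) ≤ 1 := by
            rw [← Real.exp_zero]
            exact Real.exp_le_exp.2 (by linarith [hx.1])
          exact mul_le_of_le_one_right
            (Real.rpow_nonneg (hgpos x (Set.Ioc_subset_Icc_self hx)).le _) h1
      _ ≤ ∫⁻ x in I, ENNReal.ofReal (g x ^ (-p)) := lintegral_mono_set Set.Ioc_subset_Icc_self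
      _ ≤ ENNReal.ofReal B := main2
  have hI2nn : 0 ≤ ∫ x in (0:ℝ)..s, g x ^ (-p) * Real.exp (-x) :=
    intervalIntegral.integral_nonneg hs.le fun x hx =>
      mul_nonneg (Real.rpow_nonneg (hgpos x hx).le _) (Real.exp_pos _).le
  -- I₁ bound
  set E := Real.exp (-s) with hEdef
  have hE1 : E < 1 := by
    rw [hEdef, ← Real.exp_zero]
    exact Real.exp_lt_exp.2 (by linarith)
  have hE0 : 0 < 1 - E := by linarith
  have hexpint : ∫ x in (0:ℝ)..s, Real.exp (-x) = 1 - E := by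
    rw [intervalIntegral.integral_comp_neg Real.exp, neg_zero, integral_exp, Real.exp_zero, hEdef]
  have hcont1 : ContinuousOn (fun x => g x ^ m * Real.exp (-x)) I :=
    (hg.rpow_const fun x hx => Or.inl (hgpos x hx).ne').mul hexpcont
  have hcont2 : ContinuousOn (fun x : ℝ => M ^ m * Real.exp (-x)) I :=
    continuousOn_const.mul hexpcont
  have hint1 : IntervalIntegrable (fun x => g x ^ m * Real.exp (-x)) volume 0 s := by
    apply ContinuousOn.intervalIntegrable
    rw [Set.uIcc_of_le hs.le]
    exact hIdef ▸ hcont1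
  have hint2 : IntervalIntegrable (fun x : ℝ => M ^ m * Real.exp (-x)) volume 0 s := by
    apply ContinuousOn.intervalIntegrable
    rw [Set.uIcc_of_le hs.le]
    exact hIdef ▸ hcont2
  have hI1 : ∫ x in (0:ℝ)..s, g x ^ m * Real.exp (-x) ≤ M ^ m * (1 - E) := by
    have h1 : ∫ x in (0:ℝ)..s, g x ^ m * Real.exp (-x)
        ≤ ∫ x in (0:ℝ)..s, M ^ m * Real.exp (-x) := by
      refine intervalIntegral.integral_mono_on hs.le hint1 hint2 fun x hx => ?_
      exact mul_le_mul_of_nonneg_right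
        (Real.rpow_le_rpow (hgpos x hx).le (hgle x hx) hm.le) (Real.exp_pos _).le
    rwa [intervalIntegral.integral_const_mul, hexpint] at h1
  have hI1nn : 0 ≤ ∫ x in (0:ℝ)..s, g x ^ m * Real.exp (-x) :=
    intervalIntegral.integral_nonneg hs.le fun x hx =>
      mul_nonneg (Real.rpow_nonneg (hgpos x hx).le _) (Real.exp_pos _).le
  -- combine
  have hA0 : 0 < M ^ m * (1 - E) := mul_pos (Real.rpow_pos_of_pos hM0 m) hE0
  have step1 : (∫ x in (0:ℝ)..s, g x ^ m * Real.exp (-x)) ^ n *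
      (∫ x in (0:ℝ)..s, g x ^ (-p) * Real.exp (-x)) ^ q ≤ (M ^ m * (1 - E)) ^ n * B ^ q :=
    mul_le_mul (Real.rpow_le_rpow hI1nn hI1 hn.le) (Real.rpow_le_rpow hI2nn hI2 hq.le)
      (Real.rpow_nonneg hI2nn q) (Real.rpow_nonneg hA0.le n)
  refine step1.trans ?_
  have h1mu0 : (0:ℝ) < 1 - u := by linarith
  have e1 : (M ^ m * (1 - E)) ^ n = M ^ (m*n) * (1-E) ^ n := by
    rw [Real.mul_rpow (Real.rpow_nonneg hM0.le m) hE0.le, ← Real.rpow_mul hM0.le]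
  have e2 : B ^ q = (4:ℝ) ^ (u*q) * s ^ q * M ^ (-(p*q)) * (1/(1-u)) ^ q := by
    rw [hBdef, show (4:ℝ) ^ u * s * M ^ (-p) / (1-u)
        = (4:ℝ) ^ u * s * M ^ (-p) * (1/(1-u)) by ring]
    rw [Real.mul_rpow (by positivity) (one_div_nonneg.2 h1mu0.le),
        Real.mul_rpow (by positivity) (Real.rpow_nonneg hM0.le _),
        Real.mul_rpow (Real.rpow_nonneg (by norm_num) _) hs.le,
        ← Real.rpow_mul (by norm_num : (0:ℝ) ≤ 4), ← Real.rpow_mul hM0.le,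
        show -p * q = -(p*q) by ring]
  have hMcancel : M ^ (m*n) * M ^ (-(p*q)) = 1 := by
    rw [← Real.rpow_add hM0, hmn, add_neg_cancel, Real.rpow_zero]
  have hsle : s ≤ 2 * (1 - E) := s_le_two_sub s hs hs1
  have hstep : (1-E) ^ n * s ^ q ≤ (2*(1-E)) ^ (n+q) := by
    rw [Real.rpow_add (by linarith : (0:ℝ) < 2*(1-E))]
    exact mul_le_mul (Real.rpow_le_rpow hE0.le (by linarith) hn.le)
      (Real.rpow_le_rpow hs.le hsle hq.le) (Real.rpow_nonneg hs.le q)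
      (Real.rpow_nonneg (by linarith : (0:ℝ) ≤ 2*(1-E)) n)
  have hrest0 : (0:ℝ) ≤ (4:ℝ) ^ (u*q) * (1/(1-u)) ^ q :=
    mul_nonneg (Real.rpow_nonneg (by norm_num) _)
      (Real.rpow_nonneg (one_div_nonneg.2 h1mu0.le) _)
  calc (M ^ m * (1-E)) ^ n * B ^ q
      = (M ^ (m*n) * M ^ (-(p*q))) * ((1-E) ^ n * s ^ q)
          * ((4:ℝ) ^ (u*q) * (1/(1-u)) ^ q) := by rw [e1, e2]; ring
    _ = ((1-E) ^ n * s ^ q) * ((4:ℝ) ^ (u*q) * (1/(1-u)) ^ q) := by rw [hMcancel, one_mul]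
    _ ≤ (2*(1-E)) ^ (n+q) * ((4:ℝ) ^ (u*q) * (1/(1-u)) ^ q) :=
        mul_le_mul_of_nonneg_right hstep hrest0
    _ = (4:ℝ) ^ (p*q*d) * (2*(1-E)) ^ (n+q) * (1/(1-u)) ^ q := by
        rw [show u * q = p*q*d by rw [hudef]; ring]; ring
end
end

section
/- Let d > 0, let s ≥ 1 be an integer, let m > 0, and let g : [0,s] → (0,∞) be a continuous function such that for every closed subinterval J ⊆ [0,s] and every Lebesgue-measurable subset ω ⊆ J with |ω| > 0, sup_J g ≤ (4|J|/|ω|)^d · sup_ω g. Then ∫_0^s g(x)^m e^{−x} dx ≤ e · 4^{m d} · Γ(m d + 1) · (sup_{[0,1]} g)^m, where Γ(x) := ∫_0^∞ t^{x−1} e^{−t} dt. -/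
open MeasureTheory

noncomputable section


private lemma le_biSup_aux {f : ℝ → ℝ} {s : Set ℝ} (H : BddAbove (f '' s)) {c : ℝ}
    (hc : c ∈ s) (h0 : 0 ≤ f c) : f c ≤ ⨆ x ∈ s, f x := by
  have hr : BddAbove (Set.range fun i : s => f i) := by
    rwa [← Set.image_eq_range]
  have h1 : f c ≤ ⨆ i : s, f i := le_ciSup_set H hc
  have h2 := ciSup_subtype_fun (ι := ℝ) hr
    (by rw [Real.sSup_empty]; exact h0.trans h1)
  rwa [h2] at h1

/-- The estimate of the first factor for integer `s ≥ 1`: if `g > 0` is continuous on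
`[0,s]` and satisfies a Remez-type inequality with exponent `d` on every closed
subinterval of `[0,s]`, then for `m > 0`,
`∫_0^s g^m e^{−x} dx ≤ e · 4^{md} · Γ(md+1) · (sup_{[0,1]} g)^m`. -/
theorem positive_power_estimate (d : ℝ) (hd : 0 < d) (s : ℕ) (hs : 1 ≤ s)
    (m : ℝ) (hm : 0 < m)
    (g : ℝ → ℝ) (hg : ContinuousOn g (Set.Icc 0 (s : ℝ)))
    (hgpos : ∀ x ∈ Set.Icc (0 : ℝ) (s : ℝ), 0 < g x)
    -- the Remez-type condition on every closed subinterval `J = [u,v] ⊆ [0,s]`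
    (hrem : ∀ u v : ℝ, 0 ≤ u → u ≤ v → v ≤ (s : ℝ) →
      ∀ ω : Set ℝ, ω ⊆ Set.Icc u v → MeasurableSet ω → 0 < volume ω →
        (⨆ x ∈ Set.Icc u v, g x) ≤
          (4 * (v - u) / (volume ω).toReal) ^ d * ⨆ x ∈ ω, g x) :
    (∫ x in (0 : ℝ)..(s : ℝ), g x ^ m * Real.exp (-x)) ≤
      Real.exp 1 * (4 : ℝ) ^ (m * d) * Real.Gamma (m * d + 1) *
        (⨆ x ∈ Set.Icc (0 : ℝ) 1, g x) ^ m := by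
  have hs1 : (1 : ℝ) ≤ (s : ℝ) := by exact_mod_cast hs
  have hs0 : (0 : ℝ) ≤ (s : ℝ) := by linarith
  set M : ℝ := ⨆ x ∈ Set.Icc (0 : ℝ) 1, g x with hM
  set p : ℝ := m * d with hp
  have hp0 : 0 < p := mul_pos hm hd
  have hbddS : BddAbove (g '' Set.Icc 0 (s : ℝ)) :=
    (isCompact_Icc.image_of_continuousOn hg).bddAbove
  have hM0 : 0 < M := by
    have h0 : (0 : ℝ) ∈ Set.Icc (0 : ℝ) 1 := by constructor <;> norm_num
    have hbdd : BddAbove (g '' Set.Icc (0 : ℝ) 1) :=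
      hbddS.mono (Set.image_mono (Set.Icc_subset_Icc le_rfl hs1))
    exact lt_of_lt_of_le (hgpos 0 ⟨le_rfl, hs0⟩) (le_biSup_aux hbdd h0 (hgpos 0 ⟨le_rfl, hs0⟩).le)
  -- pointwise bound
  have hpt : ∀ x ∈ Set.Icc (0 : ℝ) (s : ℝ), g x ≤ (4 * (x + 1)) ^ d * M := by
    intro x hx
    set v : ℝ := max x 1 with hv
    have hv0 : (0 : ℝ) ≤ v := le_trans zero_le_one (le_max_right _ _)
    have hvs : v ≤ (s : ℝ) := max_le hx.2 hs1
    have hvol : (0 : ENNReal) < volume (Set.Icc (0 : ℝ) 1) := by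
      rw [Real.volume_Icc]; norm_num
    have key := hrem 0 v le_rfl hv0 hvs (Set.Icc 0 1)
      (Set.Icc_subset_Icc le_rfl (le_max_right _ _)) measurableSet_Icc hvol
    have hvol1 : (volume (Set.Icc (0 : ℝ) 1)).toReal = 1 := by
      rw [Real.volume_Icc]; norm_num
    rw [hvol1, sub_zero, div_one] at key
    have hgx : g x ≤ ⨆ y ∈ Set.Icc (0 : ℝ) v, g y := by
      refine le_biSup_aux ?_ ⟨hx.1, le_max_left _ _⟩ (hgpos x hx).le
      exact hbddS.mono (Set.image_mono (Set.Icc_subset_Icc le_rfl hvs))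
    refine hgx.trans (key.trans ?_)
    have hvx1 : v ≤ x + 1 := max_le (by linarith [hx.1]) (by linarith [hx.1])
    exact mul_le_mul_of_nonneg_right
      (Real.rpow_le_rpow (by linarith) (by linarith) hd.le) hM0.le
  -- pointwise bound for the integrand
  have hptm : ∀ x ∈ Set.Icc (0 : ℝ) (s : ℝ),
      g x ^ m * Real.exp (-x) ≤ (4 : ℝ) ^ p * M ^ m * ((x + 1) ^ p * Real.exp (-x)) := by
    intro x hx
    have hx1 : (0 : ℝ) < x + 1 := by linarith [hx.1]
    have h1 : g x ^ m ≤ ((4 * (x + 1)) ^ d * M) ^ m :=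
      Real.rpow_le_rpow (hgpos x hx).le (hpt x hx) hm.le
    have h2 : ((4 * (x + 1)) ^ d * M) ^ m = (4 : ℝ) ^ p * M ^ m * (x + 1) ^ p := by
      rw [Real.mul_rpow (Real.rpow_nonneg (by linarith) d) hM0.le,
        ← Real.rpow_mul (by linarith : (0:ℝ) ≤ 4 * (x + 1)),
        Real.mul_rpow (by norm_num : (0:ℝ) ≤ 4) hx1.le, mul_comm d m, ← hp]
      ring
    calc g x ^ m * Real.exp (-x)
        ≤ ((4 * (x + 1)) ^ d * M) ^ m * Real.exp (-x) :=
          mul_le_mul_of_nonneg_right h1 (Real.exp_nonneg _)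
      _ = (4 : ℝ) ^ p * M ^ m * ((x + 1) ^ p * Real.exp (-x)) := by rw [h2]; ring
  -- integrability of both sides
  have hcont1 : ContinuousOn (fun x => g x ^ m * Real.exp (-x)) (Set.Icc 0 (s : ℝ)) := by
    refine ContinuousOn.mul ?_ ((Real.continuous_exp.comp continuous_neg).continuousOn)
    exact hg.rpow_const fun x hx => Or.inl (hgpos x hx).ne'
  have hcont2 : ContinuousOn
      (fun x => (4 : ℝ) ^ p * M ^ m * ((x + 1) ^ p * Real.exp (-x)))
      (Set.Icc 0 (s : ℝ)) := by
    refine continuousOn_const.mul (ContinuousOn.mul ?_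
      (Real.continuous_exp.comp continuous_neg).continuousOn)
    exact (continuousOn_id.add continuousOn_const).rpow_const
      fun x hx => Or.inl (by intro h; simp only [Pi.add_apply, id] at h; nlinarith [hx.1])
  have hint1 : IntervalIntegrable (fun x => g x ^ m * Real.exp (-x)) volume 0 (s : ℝ) := by
    apply ContinuousOn.intervalIntegrable; rwa [Set.uIcc_of_le hs0]
  have hint2 : IntervalIntegrable
      (fun x => (4 : ℝ) ^ p * M ^ m * ((x + 1) ^ p * Real.exp (-x))) volume 0 (s : ℝ) := by
    apply ContinuousOn.intervalIntegrable; rwa [Set.uIcc_of_le hs0]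
  have step1 : (∫ x in (0 : ℝ)..(s : ℝ), g x ^ m * Real.exp (-x)) ≤
      (4 : ℝ) ^ p * M ^ m * ∫ x in (0 : ℝ)..(s : ℝ), (x + 1) ^ p * Real.exp (-x) := by
    rw [← intervalIntegral.integral_const_mul]
    exact intervalIntegral.integral_mono_on hs0 hint1 hint2 hptm
  -- rewrite the remaining integral via translation
  have step2 : (∫ x in (0 : ℝ)..(s : ℝ), (x + 1) ^ p * Real.exp (-x)) =
      Real.exp 1 * ∫ y in (1 : ℝ)..((s : ℝ) + 1), Real.exp (-y) * y ^ p := by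
    have heq : ∀ x : ℝ, (x + 1) ^ p * Real.exp (-x) =
        Real.exp 1 * (Real.exp (-(x + 1)) * (x + 1) ^ p) := by
      intro x
      rw [← mul_assoc, ← Real.exp_add]
      ring_nf
    simp_rw [heq]
    rw [intervalIntegral.integral_const_mul]
    congr 1
    have := intervalIntegral.integral_comp_add_right
      (a := (0 : ℝ)) (b := (s : ℝ)) (fun y => Real.exp (-y) * y ^ p) 1
    simpa using this
  -- compare with the Gamma integral
  have hΓint : IntegrableOn (fun y => Real.exp (-y) * y ^ p) (Set.Ioi (0 : ℝ)) := by
    have := Real.GammaIntegral_convergent (by linarith : (0:ℝ) < p + 1)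
    simpa using this
  have step3 : (∫ y in (1 : ℝ)..((s : ℝ) + 1), Real.exp (-y) * y ^ p) ≤
      Real.Gamma (p + 1) := by
    rw [Real.Gamma_eq_integral (by linarith : (0:ℝ) < p + 1)]
    rw [intervalIntegral.integral_of_le (by linarith : (1:ℝ) ≤ (s:ℝ) + 1)]
    have hsub : Set.Ioc (1 : ℝ) ((s : ℝ) + 1) ⊆ Set.Ioi (0 : ℝ) := fun y hy => by
      simp only [Set.mem_Ioi]; linarith [hy.1]
    have hnn : 0 ≤ᵐ[volume.restrict (Set.Ioi (0 : ℝ))]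
        fun y => Real.exp (-y) * y ^ p := by
      filter_upwards [ae_restrict_mem measurableSet_Ioi] with y hy
      exact mul_nonneg (Real.exp_nonneg _) (Real.rpow_nonneg (le_of_lt hy) _)
    have := setIntegral_mono_set hΓint hnn (HasSubset.Subset.eventuallyLE hsub)
    simpa [add_sub_cancel_right] using this
  have hΓ0 : 0 ≤ Real.Gamma (p + 1) := (Real.Gamma_pos_of_pos (by linarith)).le
  calc (∫ x in (0 : ℝ)..(s : ℝ), g x ^ m * Real.exp (-x))
      ≤ (4 : ℝ) ^ p * M ^ m * ∫ x in (0 : ℝ)..(s : ℝ), (x + 1) ^ p * Real.exp (-x) := step1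
    _ = (4 : ℝ) ^ p * M ^ m *
        (Real.exp 1 * ∫ y in (1 : ℝ)..((s : ℝ) + 1), Real.exp (-y) * y ^ p) := by rw [step2]
    _ ≤ (4 : ℝ) ^ p * M ^ m * (Real.exp 1 * Real.Gamma (p + 1)) := by
        refine mul_le_mul_of_nonneg_left ?_
          (mul_nonneg (Real.rpow_nonneg (by norm_num) _) (Real.rpow_nonneg hM0.le _))
        exact mul_le_mul_of_nonneg_left step3 (Real.exp_nonneg _)
    _ = Real.exp 1 * (4 : ℝ) ^ (m * d) * Real.Gamma (m * d + 1) * M ^ m := by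
        rw [← hp]; ring
end
end

section
/- Let d > 0, let s ≥ 1 be an integer, let p > 0 with p·d < 1, and let g : [0,s] → (0,∞) be a continuous function such that for every closed subinterval J ⊆ [0,s] and every Lebesgue-measurable subset ω ⊆ J with |ω| > 0, sup_J g ≤ (4|J|/|ω|)^d · sup_ω g. Then ∫_0^s g(x)^{−p} e^{−x} dx ≤ (e · 4^{p d}/(1 − p d)) · (sup_{[0,1]} g)^{−p}. -/
open MeasureTheory

noncomputable section

lemma aux_biSup_le {g : ℝ → ℝ} {T : Set ℝ} {c : ℝ} (hc : 0 ≤ c) (h : ∀ x ∈ T, g x ≤ c) :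
    ⨆ x ∈ T, g x ≤ c :=
  Real.iSup_le (fun x => Real.iSup_le (fun hx => h x hx) hc) hc

lemma aux_le_biSup {g : ℝ → ℝ} {T : Set ℝ} {C : ℝ} (hC : ∀ x ∈ T, g x ≤ C) {x : ℝ}
    (hx : x ∈ T) : g x ≤ ⨆ y ∈ T, g y := by
  have hbdd : BddAbove (Set.range fun y => ⨆ _ : y ∈ T, g y) := by
    refine ⟨max C 0, ?_⟩
    rintro z ⟨y, rfl⟩
    exact Real.iSup_le (fun hy => le_max_of_le_left (hC y hy)) (le_max_right _ _)
  exact le_ciSup_of_le hbdd x (by rw [ciSup_pos hx])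

lemma aux_sum (n : ℕ) : ∑ k ∈ Finset.range n, (k + 1 : ℝ) * Real.exp (-k) ≤ Real.exp 1 := by
  set r : ℝ := Real.exp (-1) with hr
  have hr0 : 0 < r := Real.exp_pos _
  have hr1 : r < 1 := Real.exp_lt_one_iff.mpr (by norm_num)
  have hnorm : ‖r‖ < 1 := by rw [Real.norm_eq_abs, abs_of_pos hr0]; exact hr1
  have hsum1 : Summable (fun k : ℕ => (k : ℝ) * r ^ k) :=
    summable_pow_mul_geometric_of_norm_lt_one 1 hnorm |>.congr (by simp)
  have hsum2 : Summable (fun k : ℕ => r ^ k) := summable_geometric_of_norm_lt_one hnorm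
  have hsum : Summable (fun k : ℕ => ((k : ℝ) + 1) * r ^ k) := by
    have := hsum1.add hsum2
    refine this.congr (fun k => by ring)
  have htsum : ∑' k : ℕ, ((k : ℝ) + 1) * r ^ k = (1 - r)⁻¹ ^ 2 := by
    have h1 : ∑' k : ℕ, (k : ℝ) * r ^ k = r / (1 - r) ^ 2 :=
      tsum_coe_mul_geometric_of_norm_lt_one hnorm
    have h2 : ∑' k : ℕ, r ^ k = (1 - r)⁻¹ := tsum_geometric_of_lt_one hr0.le hr1
    have h3 : ∑' k : ℕ, ((k : ℝ) + 1) * r ^ k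
        = (∑' k : ℕ, (k : ℝ) * r ^ k) + ∑' k : ℕ, r ^ k := by
      rw [← Summable.tsum_add hsum1 hsum2]
      exact tsum_congr fun k => by ring
    rw [h3, h1, h2]
    have : (1 : ℝ) - r ≠ 0 := by nlinarith
    field_simp
    ring
  have hle : ∑ k ∈ Finset.range n, ((k : ℝ) + 1) * r ^ k ≤ (1 - r)⁻¹ ^ 2 := by
    rw [← htsum]
    exact Summable.sum_le_tsum _ (fun k _ => by positivity) hsum
  have hfin : (1 - r)⁻¹ ^ 2 ≤ Real.exp 1 := by
    have he : Real.exp 1 > 2.7182818283 := Real.exp_one_gt_d9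
    have hre : r = (Real.exp 1)⁻¹ := by rw [hr, ← Real.exp_neg]
    rw [hre]
    have h1 : (1 - (Real.exp 1)⁻¹) = (Real.exp 1 - 1) / Real.exp 1 := by
      field_simp
    rw [h1, inv_div, div_pow, div_le_iff₀ (by nlinarith)]
    nlinarith
  calc ∑ k ∈ Finset.range n, ((k : ℝ) + 1) * Real.exp (-k)
      = ∑ k ∈ Finset.range n, ((k : ℝ) + 1) * r ^ k := by
        refine Finset.sum_congr rfl fun k _ => ?_
        rw [hr, ← Real.exp_nat_mul]
        norm_num
    _ ≤ (1 - r)⁻¹ ^ 2 := hle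
    _ ≤ Real.exp 1 := hfin

/-- The estimate of the second factor for integer `s ≥ 1`: if `g > 0` is continuous on
`[0,s]` and satisfies a Remez-type inequality with exponent `d` on every closed
subinterval of `[0,s]`, then for `p > 0` with `p·d < 1`,
`∫_0^s g^{−p} e^{−x} dx ≤ (e · 4^{pd}/(1−pd)) · (sup_{[0,1]} g)^{−p}`. -/
theorem negative_power_estimate (d : ℝ) (hd : 0 < d) (s : ℕ) (hs : 1 ≤ s)
    (p : ℝ) (hp : 0 < p) (hpd : p * d < 1)
    (g : ℝ → ℝ) (hg : ContinuousOn g (Set.Icc 0 (s : ℝ)))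
    (hgpos : ∀ x ∈ Set.Icc (0 : ℝ) (s : ℝ), 0 < g x)
    -- the Remez-type condition on every closed subinterval `J = [u,v] ⊆ [0,s]`
    (hrem : ∀ u v : ℝ, 0 ≤ u → u ≤ v → v ≤ (s : ℝ) →
      ∀ ω : Set ℝ, ω ⊆ Set.Icc u v → MeasurableSet ω → 0 < volume ω →
        (⨆ x ∈ Set.Icc u v, g x) ≤
          (4 * (v - u) / (volume ω).toReal) ^ d * ⨆ x ∈ ω, g x) :
    (∫ x in (0 : ℝ)..(s : ℝ), g x ^ (-p) * Real.exp (-x)) ≤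
      Real.exp 1 * (4 : ℝ) ^ (p * d) / (1 - p * d) *
        (⨆ x ∈ Set.Icc (0 : ℝ) 1, g x) ^ (-p) := by
  set M := ⨆ x ∈ Set.Icc (0 : ℝ) 1, g x with hMdef
  have hs1 : (1 : ℝ) ≤ (s : ℝ) := by exact_mod_cast hs
  have h01s : Set.Icc (0 : ℝ) 1 ⊆ Set.Icc 0 (s : ℝ) := Set.Icc_subset_Icc le_rfl hs1
  obtain ⟨Cb, hCb⟩ : ∃ C, ∀ x ∈ Set.Icc (0 : ℝ) (s : ℝ), g x ≤ C := by
    obtain ⟨C, hC⟩ := (isCompact_Icc : IsCompact (Set.Icc (0:ℝ) (s:ℝ))).exists_bound_of_continuousOn hg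
    exact ⟨C, fun x hx => (le_abs_self _).trans (by simpa using hC x hx)⟩
  have h0mem : (0 : ℝ) ∈ Set.Icc (0 : ℝ) (s : ℝ) := ⟨le_rfl, by positivity⟩
  have hM0 : 0 < M :=
    lt_of_lt_of_le (hgpos 0 h0mem)
      (aux_le_biSup (fun x hx => hCb x (h01s hx)) ⟨le_rfl, zero_le_one⟩)
  have hpd0 : 0 < 1 - p * d := by linarith
  -- the key measure estimate coming from the Remez-type hypothesis
  have key : ∀ k : ℕ, k < s → ∀ t : ℝ, 0 ≤ t →
      volume (Set.Icc 0 ((k : ℝ) + 1) ∩ g ⁻¹' Set.Iic t) ≤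
        ENNReal.ofReal (4 * ((k : ℝ) + 1) * (t / M) ^ (1/d)) := by
    intro k hk t ht
    set ω := Set.Icc (0:ℝ) ((k : ℝ) + 1) ∩ g ⁻¹' Set.Iic t with hωdef
    have hk1s : ((k : ℝ) + 1) ≤ (s : ℝ) := by exact_mod_cast Nat.succ_le_of_lt hk
    have hIccsub : Set.Icc (0:ℝ) ((k : ℝ) + 1) ⊆ Set.Icc 0 (s : ℝ) :=
      Set.Icc_subset_Icc le_rfl hk1s
    have hωclosed : IsClosed ω :=
      (hg.mono hIccsub).preimage_isClosed_of_isClosed isClosed_Icc isClosed_Iic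
    have hωsub : ω ⊆ Set.Icc (0:ℝ) ((k : ℝ) + 1) := Set.inter_subset_left
    rcases eq_or_ne (volume ω) 0 with h0 | h0
    · rw [h0]; exact zero_le
    have hfin : volume ω < ⊤ :=
      lt_of_le_of_lt (measure_mono hωsub) measure_Icc_lt_top
    set a := (volume ω).toReal with hadef
    have ha0 : 0 < a := ENNReal.toReal_pos h0 hfin.ne
    have hpos : 0 < volume ω := (zero_le : 0 ≤ volume ω).lt_of_ne (Ne.symm h0)
    have h1 := hrem 0 ((k : ℝ) + 1) le_rfl (by positivity) hk1s ω hωsub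
      hωclosed.measurableSet hpos
    rw [sub_zero] at h1
    have h2 : (⨆ x ∈ ω, g x) ≤ t := aux_biSup_le ht (fun x hx => hx.2)
    have h3 : M ≤ ⨆ x ∈ Set.Icc (0:ℝ) ((k : ℝ) + 1), g x := by
      have h0le : (0:ℝ) ≤ ⨆ x ∈ Set.Icc (0:ℝ) ((k : ℝ) + 1), g x :=
        le_trans (hgpos 0 h0mem).le
          (aux_le_biSup (fun y hy => hCb y (hIccsub hy)) ⟨le_rfl, by positivity⟩)
      refine Real.iSup_le (fun x => Real.iSup_le (fun hx => ?_) h0le) h0le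
      exact aux_le_biSup (fun y hy => hCb y (hIccsub hy))
        (Set.Icc_subset_Icc le_rfl (by linarith) hx)
    have h4 : M ≤ (4 * ((k : ℝ) + 1) / a) ^ d * t := by
      refine h3.trans (h1.trans ?_)
      exact mul_le_mul_of_nonneg_left h2 (Real.rpow_nonneg (by positivity) _)
    have ht0 : 0 < t := by
      rcases ht.lt_or_eq with h | h
      · exact h
      · exfalso; rw [← h, mul_zero] at h4; linarith
    -- from h4 derive `a ≤ 4(k+1) (t/M)^{1/d}`
    have hb0 : 0 < 4 * ((k : ℝ) + 1) / a := by positivity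
    have h5 : M / t ≤ (4 * ((k : ℝ) + 1) / a) ^ d := by
      rw [div_le_iff₀ ht0]; exact h4
    have h6 : (M / t) ^ (1/d) ≤ 4 * ((k : ℝ) + 1) / a := by
      rw [one_div]
      have := Real.rpow_le_rpow (by positivity) h5 (by positivity : (0:ℝ) ≤ d⁻¹)
      rwa [Real.rpow_rpow_inv hb0.le hd.ne'] at this
    have hq0 : 0 < (M / t) ^ (1/d) := Real.rpow_pos_of_pos (by positivity) _
    have h7 : a ≤ 4 * ((k : ℝ) + 1) * (t / M) ^ (1/d) := by
      have h8 : (t / M) ^ (1/d) = ((M / t) ^ (1/d))⁻¹ := by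
        rw [← Real.inv_rpow (by positivity), inv_div]
      rw [h8, ← div_eq_mul_inv, le_div_iff₀ hq0]
      calc a * (M / t) ^ (1/d) ≤ a * (4 * ((k : ℝ) + 1) / a) := by
            exact mul_le_mul_of_nonneg_left h6 ha0.le
        _ = 4 * ((k : ℝ) + 1) := by field_simp
    calc volume ω = ENNReal.ofReal a := (ENNReal.ofReal_toReal hfin.ne).symm
      _ ≤ ENNReal.ofReal (4 * ((k : ℝ) + 1) * (t / M) ^ (1/d)) := ENNReal.ofReal_le_ofReal h7
  -- the estimate on each unit interval, without the exponential weight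
  have unit : ∀ k : ℕ, k < s →
      (∫ x in (k : ℝ)..((k : ℝ) + 1), g x ^ (-p)) ≤
        (4 * ((k : ℝ) + 1)) ^ (p * d) * M ^ (-p) / (1 - p * d) := by
    intro k hk
    have hk1s : ((k : ℝ) + 1) ≤ (s : ℝ) := by exact_mod_cast Nat.succ_le_of_lt hk
    have hsub : Set.Ioc (k : ℝ) ((k : ℝ) + 1) ⊆ Set.Icc 0 (s : ℝ) := fun x hx =>
      ⟨le_trans (by positivity) hx.1.le, hx.2.trans hk1s⟩
    set μ := volume.restrict (Set.Ioc (k : ℝ) ((k : ℝ) + 1)) with hμdef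
    set C : ℝ := 4 * ((k : ℝ) + 1) with hCdef
    have hC0 : (0:ℝ) < C := by positivity
    have hCd0 : (0:ℝ) < C ^ d := Real.rpow_pos_of_pos hC0 _
    set T : ℝ := C ^ d / M with hTdef
    have hT0 : (0:ℝ) < T := by positivity
    set A : ℝ := C ^ (p * d) * M ^ (-p) with hAdef
    have hA0 : (0:ℝ) < A := by
      have := Real.rpow_pos_of_pos hC0 (p * d)
      have := Real.rpow_pos_of_pos hM0 (-p)
      positivity
    set q : ℝ := p * C * M ^ (-(1/d)) with hqdef
    have hq0 : (0:ℝ) < q := by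
      have := Real.rpow_pos_of_pos hM0 (-(1/d))
      positivity
    set e : ℝ := p - 1/d - 1 with hedef
    have hp1d : p < 1/d := (lt_div_iff₀ hd).mpr hpd
    have he1 : e < -1 := by rw [hedef]; linarith
    -- measurability and positivity facts
    have hgae : AEMeasurable g μ := (hg.mono hsub).aemeasurable measurableSet_Ioc
    have hfae : AEMeasurable (fun x => (g x)⁻¹) μ := hgae.inv
    have hfnn : 0 ≤ᵐ[μ] fun x => (g x)⁻¹ := by
      rw [hμdef]
      exact (ae_restrict_iff' measurableSet_Ioc).mpr
        (Filter.Eventually.of_forall fun x hx => inv_nonneg.mpr (hgpos x (hsub hx)).le)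
    have hnn : 0 ≤ᵐ[μ] fun x => g x ^ (-p) := by
      rw [hμdef]
      exact (ae_restrict_iff' measurableSet_Ioc).mpr
        (Filter.Eventually.of_forall fun x hx => Real.rpow_nonneg (hgpos x (hsub hx)).le _)
    have hmb : AEStronglyMeasurable (fun x => g x ^ (-p)) μ :=
      (hgae.pow_const (-p)).aestronglyMeasurable
    -- reduce to a Lebesgue integral
    have hIoc : (∫ x in (k : ℝ)..((k : ℝ) + 1), g x ^ (-p)) = ∫ x, g x ^ (-p) ∂μ := by
      rw [intervalIntegral.integral_of_le (by linarith)]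
    have hInt : ∫ x, g x ^ (-p) ∂μ = (∫⁻ x, ENNReal.ofReal (g x ^ (-p)) ∂μ).toReal :=
      integral_eq_lintegral_of_nonneg_ae hnn hmb
    -- rewrite the integrand as `((g x)⁻¹) ^ p`
    have hcongr : ∫⁻ x, ENNReal.ofReal (g x ^ (-p)) ∂μ
        = ∫⁻ x, ENNReal.ofReal ((g x)⁻¹ ^ p) ∂μ := by
      refine lintegral_congr_ae ?_
      rw [hμdef]
      refine (ae_restrict_iff' measurableSet_Ioc).mpr (Filter.Eventually.of_forall fun x hx => ?_)
      have hgx := hgpos x (hsub hx)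
      show ENNReal.ofReal (g x ^ (-p)) = ENNReal.ofReal ((g x)⁻¹ ^ p)
      rw [Real.rpow_neg hgx.le, ← Real.inv_rpow hgx.le]
    -- layer cake
    have hlayer : ∫⁻ x, ENNReal.ofReal ((g x)⁻¹ ^ p) ∂μ =
        ∫⁻ t in Set.Ioi (0:ℝ), μ {a | t < (g a)⁻¹} * ENNReal.ofReal (p * t ^ (p - 1)) := by
      have gint : ∀ t > (0:ℝ), IntervalIntegrable (fun u => p * u ^ (p - 1)) volume 0 t :=
        fun t _ => (intervalIntegral.intervalIntegrable_rpow' (by linarith)).const_mul p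
      have gnn : ∀ᵐ t ∂(volume.restrict (Set.Ioi (0:ℝ))), 0 ≤ p * t ^ (p - 1) :=
        (ae_restrict_iff' measurableSet_Ioi).mpr
          (Filter.Eventually.of_forall fun t ht => by
            have : (0:ℝ) < t := ht
            positivity)
      have hlc := lintegral_comp_eq_lintegral_meas_lt_mul μ hfnn hfae gint gnn
      rw [← hlc]
      refine lintegral_congr_ae ?_
      rw [hμdef]
      refine (ae_restrict_iff' measurableSet_Ioc).mpr (Filter.Eventually.of_forall fun x hx => ?_)
      have hgx := hgpos x (hsub hx)
      have hgx' : (0:ℝ) < (g x)⁻¹ := by positivity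
      show ENNReal.ofReal ((g x)⁻¹ ^ p)
          = ENNReal.ofReal (∫ t in (0:ℝ)..(g x)⁻¹, p * t ^ (p - 1))
      congr 1
      rw [intervalIntegral.integral_const_mul, integral_rpow (Or.inl (by linarith))]
      rw [Real.zero_rpow (by intro h; rw [sub_add_cancel] at h; exact hp.ne' h)]
      rw [show p - 1 + 1 = p by ring]
      field_simp
      rw [sub_zero]
    -- split the outer integral at `T`
    have hsplit : ∫⁻ t in Set.Ioi (0:ℝ), μ {a | t < (g a)⁻¹} * ENNReal.ofReal (p * t ^ (p - 1))
        = (∫⁻ t in Set.Ioc (0:ℝ) T, μ {a | t < (g a)⁻¹} * ENNReal.ofReal (p * t ^ (p - 1)))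
          + ∫⁻ t in Set.Ioi T, μ {a | t < (g a)⁻¹} * ENNReal.ofReal (p * t ^ (p - 1)) := by
      rw [← Set.Ioc_union_Ioi_eq_Ioi hT0.le,
        lintegral_union measurableSet_Ioi Set.Ioc_disjoint_Ioi_same]
    -- piece 1
    have hμuniv : μ Set.univ = 1 := by
      rw [hμdef, Measure.restrict_apply_univ, Real.volume_Ioc]
      norm_num
    have hint1 : IntegrableOn (fun t => p * t ^ (p - 1)) (Set.Ioc (0:ℝ) T) volume :=
      ((intervalIntegral.intervalIntegrable_rpow'
        (by linarith : (-1:ℝ) < p - 1)).const_mul p).1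
    have hval1 : ∫ t in Set.Ioc (0:ℝ) T, p * t ^ (p - 1) = T ^ p := by
      rw [← intervalIntegral.integral_of_le hT0.le,
        intervalIntegral.integral_const_mul, integral_rpow (Or.inl (by linarith))]
      rw [Real.zero_rpow (by intro h; rw [sub_add_cancel] at h; exact hp.ne' h)]
      rw [show p - 1 + 1 = p by ring]
      field_simp
      rw [sub_zero]
    have hp1 : (∫⁻ t in Set.Ioc (0:ℝ) T, μ {a | t < (g a)⁻¹} * ENNReal.ofReal (p * t ^ (p - 1)))
        ≤ ENNReal.ofReal (T ^ p) := by
      calc ∫⁻ t in Set.Ioc (0:ℝ) T, μ {a | t < (g a)⁻¹} * ENNReal.ofReal (p * t ^ (p - 1))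
          ≤ ∫⁻ t in Set.Ioc (0:ℝ) T, ENNReal.ofReal (p * t ^ (p - 1)) := by
            refine lintegral_mono fun t => ?_
            calc μ {a | t < (g a)⁻¹} * ENNReal.ofReal (p * t ^ (p - 1))
                ≤ 1 * ENNReal.ofReal (p * t ^ (p - 1)) :=
                  mul_le_mul_left
                    (le_trans (measure_mono (Set.subset_univ _)) hμuniv.le) _
              _ = ENNReal.ofReal (p * t ^ (p - 1)) := one_mul _
        _ = ENNReal.ofReal (∫ t in Set.Ioc (0:ℝ) T, p * t ^ (p - 1)) := by
            refine (ofReal_integral_eq_lintegral_ofReal hint1 ?_).symm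
            exact (ae_restrict_iff' measurableSet_Ioc).mpr
              (Filter.Eventually.of_forall fun t ht => by
                have : (0:ℝ) < t := ht.1
                positivity)
        _ = ENNReal.ofReal (T ^ p) := by rw [hval1]
    -- piece 2
    have hint2 : IntegrableOn (fun t => q * t ^ e) (Set.Ioi T) volume :=
      (integrableOn_Ioi_rpow_of_lt he1 hT0).const_mul q
    have hval2 : ∫ t in Set.Ioi T, q * t ^ e = q * (-T ^ (e + 1) / (e + 1)) := by
      rw [MeasureTheory.integral_const_mul, integral_Ioi_rpow_of_lt he1 hT0]
    have hp2 : (∫⁻ t in Set.Ioi T, μ {a | t < (g a)⁻¹} * ENNReal.ofReal (p * t ^ (p - 1)))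
        ≤ ENNReal.ofReal (q * (-T ^ (e + 1) / (e + 1))) := by
      calc ∫⁻ t in Set.Ioi T, μ {a | t < (g a)⁻¹} * ENNReal.ofReal (p * t ^ (p - 1))
          ≤ ∫⁻ t in Set.Ioi T, ENNReal.ofReal (q * t ^ e) := by
            refine lintegral_mono_ae ((ae_restrict_iff' measurableSet_Ioi).mpr
              (Filter.Eventually.of_forall fun t ht => ?_))
            have htT : T < t := ht
            have ht0 : (0:ℝ) < t := hT0.trans htT
            -- bound the measure using `key`
            have hmeas : μ {a | t < (g a)⁻¹} ≤ ENNReal.ofReal (C * (t⁻¹ / M) ^ (1/d)) := by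
              rw [hμdef, Measure.restrict_apply' measurableSet_Ioc]
              refine le_trans (measure_mono ?_) (key k hk t⁻¹ (by positivity))
              rintro x ⟨hxt, hxIoc⟩
              refine ⟨⟨le_trans (by positivity) hxIoc.1.le, hxIoc.2⟩, ?_⟩
              have hgx := hgpos x (hsub hxIoc)
              have : g x < t⁻¹ := by
                have h2 := inv_strictAnti₀ ht0 hxt
                rwa [inv_inv] at h2
              exact this.le
            calc μ {a | t < (g a)⁻¹} * ENNReal.ofReal (p * t ^ (p - 1))
                ≤ ENNReal.ofReal (C * (t⁻¹ / M) ^ (1/d)) * ENNReal.ofReal (p * t ^ (p - 1)) :=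
                  mul_le_mul_left hmeas _
              _ = ENNReal.ofReal (C * (t⁻¹ / M) ^ (1/d) * (p * t ^ (p - 1))) := by
                  rw [← ENNReal.ofReal_mul (by positivity)]
              _ = ENNReal.ofReal (q * t ^ e) := by
                  congr 1
                  rw [div_eq_mul_inv, Real.mul_rpow (by positivity) (by positivity),
                    Real.inv_rpow ht0.le, Real.inv_rpow hM0.le,
                    ← Real.rpow_neg ht0.le, ← Real.rpow_neg hM0.le]
                  have hte : t ^ (-(1/d)) * t ^ (p - 1) = t ^ e := by
                    rw [← Real.rpow_add ht0, hedef]; congr 1; ring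
                  rw [hqdef, ← hte]; ring
        _ = ENNReal.ofReal (∫ t in Set.Ioi T, q * t ^ e) := by
            refine (ofReal_integral_eq_lintegral_ofReal hint2 ?_).symm
            exact (ae_restrict_iff' measurableSet_Ioi).mpr
              (Filter.Eventually.of_forall fun t ht => by
                have : (0:ℝ) < t := hT0.trans ht
                positivity)
        _ = ENNReal.ofReal (q * (-T ^ (e + 1) / (e + 1))) := by rw [hval2]
    -- the real-number computation
    have hTp : T ^ p = A := by
      rw [hTdef, hAdef, Real.div_rpow hCd0.le hM0.le, ← Real.rpow_mul hC0.le,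
        Real.rpow_neg hM0.le, div_eq_mul_inv, mul_comm d p]
    have hTe : T ^ (p - 1/d) = C ^ (p * d - 1) * M ^ (1/d - p) := by
      rw [hTdef, Real.div_rpow hCd0.le hM0.le, ← Real.rpow_mul hC0.le,
        show d * (p - 1/d) = p * d - 1 by field_simp,
        div_eq_mul_inv, ← Real.rpow_neg hM0.le, show -(p - 1/d) = 1/d - p by ring]
    have hqT : q * T ^ (p - 1/d) = p * A := by
      rw [hTe, hqdef, hAdef]
      rw [show p * C * M ^ (-(1/d)) * (C ^ (p * d - 1) * M ^ (1/d - p))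
          = p * (C * C ^ (p * d - 1)) * (M ^ (-(1/d)) * M ^ (1/d - p)) by ring]
      rw [← Real.rpow_add hM0, show -(1/d) + (1/d - p) = -p by ring]
      rw [show C * C ^ (p * d - 1) = C ^ (1 + (p * d - 1)) by
        rw [Real.rpow_add hC0, Real.rpow_one]]
      rw [show (1:ℝ) + (p * d - 1) = p * d by ring]
      ring
    have hfinal : T ^ p + q * (-T ^ (e + 1) / (e + 1)) = A / (1 - p * d) := by
      have he1' : e + 1 = p - 1/d := by rw [hedef]; ring
      have hne : p - 1/d ≠ 0 := by intro h; linarith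
      rw [he1', hTp, show q * (-T ^ (p - 1/d) / (p - 1/d))
        = q * T ^ (p - 1/d) * (-1 / (p - 1/d)) by ring, hqT]
      have hd' : d ≠ 0 := hd.ne'
      have h4 : (1:ℝ) - p * d ≠ 0 := hpd0.ne'
      have hkey : -1 / (p - 1/d) = d / (1 - p * d) := by
        rw [div_eq_div_iff hne h4]
        field_simp
        ring
      rw [hkey]
      field_simp
      ring
    -- put everything together
    have hchain : ∫⁻ x, ENNReal.ofReal (g x ^ (-p)) ∂μ ≤ ENNReal.ofReal (A / (1 - p * d)) := by
      rw [hcongr, hlayer, hsplit, ← hfinal]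
      have hnn2 : (0:ℝ) ≤ q * (-T ^ (e + 1) / (e + 1)) := by
        rw [← hval2]
        refine integral_nonneg_of_ae ((ae_restrict_iff' measurableSet_Ioi).mpr
          (Filter.Eventually.of_forall fun t ht => ?_))
        have : (0:ℝ) < t := hT0.trans ht
        positivity
      rw [ENNReal.ofReal_add (by positivity) hnn2]
      exact add_le_add hp1 hp2
    rw [hIoc, hInt]
    rw [hAdef] at hchain
    exact ENNReal.toReal_le_of_le_ofReal (by positivity) hchain
  -- integrability facts
  have hcont : ContinuousOn (fun x => g x ^ (-p) * Real.exp (-x)) (Set.Icc 0 (s : ℝ)) := by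
    apply ContinuousOn.mul
    · exact hg.rpow_const (fun x hx => Or.inl (hgpos x hx).ne')
    · exact (Real.continuous_exp.comp continuous_neg).continuousOn
  have hint : ∀ k : ℕ, k < s → IntervalIntegrable (fun x => g x ^ (-p) * Real.exp (-x))
      volume (k : ℝ) ((k : ℝ) + 1) := by
    intro k hk
    apply (hcont.mono ?_).intervalIntegrable
    rw [Set.uIcc_of_le (by linarith)]
    refine Set.Icc_subset_Icc (by positivity) ?_
    have : (k : ℝ) + 1 ≤ (s : ℝ) := by exact_mod_cast Nat.succ_le_of_lt hk
    linarith
  -- bound on each unit interval including the exponential weight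
  have unit' : ∀ k : ℕ, k < s →
      (∫ x in (k : ℝ)..((k : ℝ) + 1), g x ^ (-p) * Real.exp (-x)) ≤
        ((k : ℝ) + 1) * Real.exp (-(k : ℝ)) * ((4:ℝ) ^ (p * d) * M ^ (-p) / (1 - p * d)) := by
    intro k hk
    have hk1s : ((k : ℝ) + 1) ≤ (s : ℝ) := by exact_mod_cast Nat.succ_le_of_lt hk
    have hsub : Set.Icc (k : ℝ) ((k : ℝ) + 1) ⊆ Set.Icc 0 (s : ℝ) :=
      Set.Icc_subset_Icc (by positivity) hk1s
    have hsub' : Set.uIcc (k : ℝ) ((k : ℝ) + 1) ⊆ Set.Icc 0 (s : ℝ) := by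
      rw [Set.uIcc_of_le (by linarith)]; exact hsub
    have hcont1 : ContinuousOn (fun x => g x ^ (-p)) (Set.Icc 0 (s : ℝ)) :=
      hg.rpow_const (fun x hx => Or.inl (hgpos x hx).ne')
    have hint2 : IntervalIntegrable (fun x => g x ^ (-p) * Real.exp (-(k : ℝ)))
        volume (k : ℝ) ((k : ℝ) + 1) :=
      ((hcont1.mono hsub').mul continuousOn_const).intervalIntegrable
    have step1 : (∫ x in (k : ℝ)..((k : ℝ) + 1), g x ^ (-p) * Real.exp (-x)) ≤
        ∫ x in (k : ℝ)..((k : ℝ) + 1), g x ^ (-p) * Real.exp (-(k : ℝ)) := by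
      refine intervalIntegral.integral_mono_on (by linarith) (hint k hk) hint2 fun x hx => ?_
      have hgx : 0 ≤ g x := (hgpos x (hsub hx)).le
      exact mul_le_mul_of_nonneg_left (Real.exp_le_exp.mpr (by linarith [hx.1]))
        (Real.rpow_nonneg hgx _)
    have step2 : (∫ x in (k : ℝ)..((k : ℝ) + 1), g x ^ (-p) * Real.exp (-(k : ℝ)))
        = (∫ x in (k : ℝ)..((k : ℝ) + 1), g x ^ (-p)) * Real.exp (-(k : ℝ)) :=
      intervalIntegral.integral_mul_const _ _
    have step3 : (∫ x in (k : ℝ)..((k : ℝ) + 1), g x ^ (-p)) * Real.exp (-(k : ℝ)) ≤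
        ((4 * ((k : ℝ) + 1)) ^ (p * d) * M ^ (-p) / (1 - p * d)) * Real.exp (-(k : ℝ)) :=
      mul_le_mul_of_nonneg_right (unit k hk) (Real.exp_nonneg _)
    have hpow : (4 * ((k : ℝ) + 1)) ^ (p * d) ≤ 4 ^ (p * d) * ((k : ℝ) + 1) := by
      rw [Real.mul_rpow (by norm_num) (by positivity)]
      refine mul_le_mul_of_nonneg_left ?_ (by positivity)
      calc ((k : ℝ) + 1) ^ (p * d) ≤ ((k : ℝ) + 1) ^ (1 : ℝ) :=
            Real.rpow_le_rpow_of_exponent_le (by simp) hpd.le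
        _ = (k : ℝ) + 1 := Real.rpow_one _
    have step4 : ((4 * ((k : ℝ) + 1)) ^ (p * d) * M ^ (-p) / (1 - p * d)) * Real.exp (-(k : ℝ))
        ≤ ((k : ℝ) + 1) * Real.exp (-(k : ℝ)) * ((4:ℝ) ^ (p * d) * M ^ (-p) / (1 - p * d)) := by
      have hMp : (0:ℝ) ≤ M ^ (-p) := Real.rpow_nonneg hM0.le _
      calc (4 * ((k : ℝ) + 1)) ^ (p * d) * M ^ (-p) / (1 - p * d) * Real.exp (-(k : ℝ))
          ≤ (4 ^ (p * d) * ((k : ℝ) + 1)) * M ^ (-p) / (1 - p * d) * Real.exp (-(k : ℝ)) := by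
            gcongr
        _ = ((k : ℝ) + 1) * Real.exp (-(k : ℝ)) * ((4:ℝ) ^ (p * d) * M ^ (-p) / (1 - p * d)) := by
            ring
    calc (∫ x in (k : ℝ)..((k : ℝ) + 1), g x ^ (-p) * Real.exp (-x))
        ≤ ∫ x in (k : ℝ)..((k : ℝ) + 1), g x ^ (-p) * Real.exp (-(k : ℝ)) := step1
      _ = (∫ x in (k : ℝ)..((k : ℝ) + 1), g x ^ (-p)) * Real.exp (-(k : ℝ)) := step2
      _ ≤ ((4 * ((k : ℝ) + 1)) ^ (p * d) * M ^ (-p) / (1 - p * d)) * Real.exp (-(k : ℝ)) := step3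
      _ ≤ ((k : ℝ) + 1) * Real.exp (-(k : ℝ)) * ((4:ℝ) ^ (p * d) * M ^ (-p) / (1 - p * d)) :=
          step4
  -- summing up
  have split : (∫ x in (0 : ℝ)..(s : ℝ), g x ^ (-p) * Real.exp (-x)) =
      ∑ k ∈ Finset.range s, ∫ x in (k : ℝ)..((k : ℝ) + 1), g x ^ (-p) * Real.exp (-x) := by
    have := intervalIntegral.sum_integral_adjacent_intervals (a := fun k : ℕ => (k : ℝ))
      (μ := volume) (f := fun x => g x ^ (-p) * Real.exp (-x)) (n := s) ?_
    · simp only [Nat.cast_zero] at this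
      rw [← this]
      exact Finset.sum_congr rfl fun k _ => by norm_num
    · intro k hk
      have := hint k hk
      convert this using 2
      norm_num
  rw [split]
  calc ∑ k ∈ Finset.range s, ∫ x in (k : ℝ)..((k : ℝ) + 1), g x ^ (-p) * Real.exp (-x)
      ≤ ∑ k ∈ Finset.range s,
          ((k : ℝ) + 1) * Real.exp (-(k : ℝ)) * ((4:ℝ) ^ (p * d) * M ^ (-p) / (1 - p * d)) := by
        exact Finset.sum_le_sum fun k hk => unit' k (Finset.mem_range.mp hk)
    _ = (∑ k ∈ Finset.range s, ((k : ℝ) + 1) * Real.exp (-(k : ℝ))) *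
          ((4:ℝ) ^ (p * d) * M ^ (-p) / (1 - p * d)) := by
        rw [Finset.sum_mul]
    _ ≤ Real.exp 1 * ((4:ℝ) ^ (p * d) * M ^ (-p) / (1 - p * d)) := by
        refine mul_le_mul_of_nonneg_right ?_ (by positivity)
        exact aux_sum s
    _ = Real.exp 1 * (4 : ℝ) ^ (p * d) / (1 - p * d) * M ^ (-p) := by ring
end
end
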